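/- arXiv:2405.03875 — 8 statements merged into one kernel-verified Lean document; each statement's English description precedes it below -/
import Mathlib

section
/- Let N be a finite set with |N| = n ≥ 3, and let S₁, S₂ ⊆ N be two subsets with S₁ ≠ S₂, S₁ ≠ ∅, S₂ ≠ ∅, S₁ ≠ N, and S₂ ≠ N. Let F⁽⁰⁾ denote the set of all utility functions v on N with v(S₁) ≥ v(S₂), and F⁽ᵃ⁾ the set of all utility functions v on N with v(S₁) < v(S₂). Then for every function h : ℝ^N → [0, 1], one has inf_{v ∈ F⁽⁰⁾} (1 − h(φ(v))) + inf_{v ∈ F⁽ᵃ⁾} h(φ(v)) ≤ 1. -/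
open Finset

/-- The Shapley value of point `i` under utility function `v` on the player set `ι`. -/
noncomputable def shapley {ι : Type*} [Fintype ι] [DecidableEq ι]
    (v : Finset ι → ℝ) (i : ι) : ℝ :=
  (Fintype.card ι : ℝ)⁻¹ *
    ∑ k ∈ Finset.Icc 1 (Fintype.card ι),
      ((Fintype.card ι - 1).choose (k - 1) : ℝ)⁻¹ *
        ∑ S ∈ (Finset.univ.erase i).powerset.filter (fun S => S.card = k - 1),
          (v (insert i S) - v S)

section Aux
variable {ι : Type*} [Fintype ι] [DecidableEq ι]

noncomputable def delta (T : Finset ι) : Finset ι → ℝ := fun S => if S = T then 1 else 0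

noncomputable def Phi : (Finset ι → ℝ) →ₗ[ℝ] (ι → ℝ) where
  toFun v := shapley v
  map_add' v w := by
    funext i
    simp only [shapley, Pi.add_apply]
    rw [← mul_add, ← Finset.sum_add_distrib]
    congr 1
    refine Finset.sum_congr rfl fun k _ => ?_
    rw [← mul_add, ← Finset.sum_add_distrib]
    congr 1
    refine Finset.sum_congr rfl fun S _ => ?_
    ring
  map_smul' c v := by
    funext i
    simp only [shapley, Pi.smul_apply, smul_eq_mul, RingHom.id_apply]
    rw [mul_left_comm]
    congr 1
    rw [Finset.mul_sum]
    refine Finset.sum_congr rfl fun k _ => ?_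
    rw [mul_left_comm]
    congr 1
    rw [Finset.mul_sum]
    refine Finset.sum_congr rfl fun S _ => ?_
    ring

lemma shapley_delta (T : Finset ι) (hT : T.Nonempty) (i : ι) :
    shapley (delta T) i =
      if i ∈ T then ((Fintype.card ι : ℝ) * ((Fintype.card ι - 1).choose (T.card - 1)))⁻¹
      else -((Fintype.card ι : ℝ) * ((Fintype.card ι - 1).choose T.card))⁻¹ := by
  classical
  set n := Fintype.card ι with hn
  by_cases hi : i ∈ T
  · simp only [hi, if_true]
    have hinner : ∀ k ∈ Finset.Icc 1 n,
        (∑ S ∈ (Finset.univ.erase i).powerset.filter (fun S => S.card = k - 1),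
          (delta T (insert i S) - delta T S))
        = if k = T.card then 1 else 0 := by
      intro k hk
      have : ∀ S ∈ (Finset.univ.erase i).powerset.filter (fun S => S.card = k - 1),
          (delta T (insert i S) - delta T S) = if S = T.erase i then 1 else 0 := by
        intro S hS
        simp only [Finset.mem_filter, Finset.mem_powerset] at hS
        have hiS : i ∉ S := fun hmem => (Finset.mem_erase.mp (hS.1 hmem)).1 rfl
        have h2 : delta T S = 0 := by
          simp only [delta, if_neg (fun hST : S = T => hiS (hST ▸ hi))]
        rw [h2, sub_zero]
        simp only [delta]
        congr 1
        simp only [eq_iff_iff]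
        constructor
        · intro hins
          rw [← hins, Finset.erase_insert hiS]
        · intro hS'
          rw [hS', Finset.insert_erase hi]
      rw [Finset.sum_congr rfl this, Finset.sum_ite_eq' _ (T.erase i) (fun _ => (1:ℝ))]
      simp only [Finset.mem_filter, Finset.mem_powerset, Finset.card_erase_of_mem hi]
      have hTcard : 1 ≤ T.card := hT.card_pos
      have hk1 : 1 ≤ k := (Finset.mem_Icc.mp hk).1
      by_cases hkT : k = T.card
      · rw [if_pos, if_pos hkT]
        exact ⟨Finset.erase_subset_erase i (Finset.subset_univ T), by omega⟩
      · rw [if_neg, if_neg hkT]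
        intro hmem
        exact hkT (by omega : k = T.card)
    rw [shapley, ← hn]
    have houter : ∀ k ∈ Finset.Icc 1 n, ((n - 1).choose (k - 1) : ℝ)⁻¹ *
        (∑ S ∈ (Finset.univ.erase i).powerset.filter (fun S => S.card = k - 1),
          (delta T (insert i S) - delta T S))
        = if k = T.card then ((n - 1).choose (k - 1) : ℝ)⁻¹ else 0 := fun k hk => by
      rw [hinner k hk, mul_ite, mul_one, mul_zero]
    rw [Finset.sum_congr rfl houter]
    have hTmem : T.card ∈ Finset.Icc 1 n := by
      rw [Finset.mem_Icc]
      exact ⟨hT.card_pos, by rw [hn, ← Finset.card_univ]; exact Finset.card_le_card (Finset.subset_univ T)⟩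
    rw [Finset.sum_ite_eq' _ T.card (fun k => ((n - 1).choose (k - 1) : ℝ)⁻¹), if_pos hTmem,
      mul_inv]
  · simp only [hi, if_false]
    have hinner : ∀ k ∈ Finset.Icc 1 n,
        (∑ S ∈ (Finset.univ.erase i).powerset.filter (fun S => S.card = k - 1),
          (delta T (insert i S) - delta T S))
        = if k = T.card + 1 then -1 else 0 := by
      intro k hk
      have : ∀ S ∈ (Finset.univ.erase i).powerset.filter (fun S => S.card = k - 1),
          (delta T (insert i S) - delta T S) = if S = T then -1 else 0 := by
        intro S hS
        have h1 : delta T (insert i S) = 0 := by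
          simp only [delta]
          exact if_neg (fun hST => hi (by rw [← hST]; exact Finset.mem_insert_self i S))
        rw [h1, zero_sub]
        simp only [delta]
        by_cases hST : S = T
        · rw [if_pos hST, if_pos hST]
        · rw [if_neg hST, if_neg hST, neg_zero]
      rw [Finset.sum_congr rfl this, Finset.sum_ite_eq' _ T (fun _ => (-1:ℝ))]
      simp only [Finset.mem_filter, Finset.mem_powerset]
      have hk1 : 1 ≤ k := (Finset.mem_Icc.mp hk).1
      have hTsub : T ⊆ Finset.univ.erase i := Finset.subset_erase.mpr ⟨Finset.subset_univ T, hi⟩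
      by_cases hkT : k = T.card + 1
      · rw [if_pos, if_pos hkT]
        exact ⟨hTsub, by omega⟩
      · rw [if_neg, if_neg hkT]
        intro hmem
        exact hkT (by omega : k = T.card + 1)
    rw [shapley, ← hn]
    have houter : ∀ k ∈ Finset.Icc 1 n, ((n - 1).choose (k - 1) : ℝ)⁻¹ *
        (∑ S ∈ (Finset.univ.erase i).powerset.filter (fun S => S.card = k - 1),
          (delta T (insert i S) - delta T S))
        = if k = T.card + 1 then -((n - 1).choose (k - 1) : ℝ)⁻¹ else 0 := fun k hk => by
      rw [hinner k hk, mul_ite, mul_neg, mul_one, mul_zero]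
    rw [Finset.sum_congr rfl houter]
    have hTmem : T.card + 1 ∈ Finset.Icc 1 n := by
      rw [Finset.mem_Icc]
      have : T.card ≤ n - 1 := by
        have := Finset.card_le_card (Finset.subset_erase.mpr ⟨Finset.subset_univ T, hi⟩)
        rwa [Finset.card_erase_of_mem (Finset.mem_univ i), Finset.card_univ] at this
      have hn1 : 1 ≤ n := by rw [hn, ← Finset.card_univ]; exact Finset.card_pos.mpr ⟨i, Finset.mem_univ i⟩
      omega
    rw [Finset.sum_ite_eq' _ (T.card + 1) (fun k => -((n - 1).choose (k - 1) : ℝ)⁻¹),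
      if_pos hTmem]
    simp only [Nat.add_sub_cancel]
    rw [mul_neg, ← mul_inv]


noncomputable def ind (T : Finset ι) : ι → ℝ := fun i => if i ∈ T then 1 else 0

lemma phi_delta_eq (T : Finset ι) (hT : T.Nonempty) :
    Phi (delta T) = (((Fintype.card ι : ℝ) * ((Fintype.card ι - 1).choose (T.card - 1)))⁻¹
        + ((Fintype.card ι : ℝ) * ((Fintype.card ι - 1).choose T.card))⁻¹) • ind T
      - ((Fintype.card ι : ℝ) * ((Fintype.card ι - 1).choose T.card))⁻¹ • ind Finset.univ := by
  funext i
  show shapley (delta T) i = _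
  rw [shapley_delta T hT i]
  simp only [Pi.sub_apply, Pi.smul_apply, smul_eq_mul, ind, Finset.mem_univ, if_true]
  by_cases hi : i ∈ T
  · rw [if_pos hi, if_pos hi]; ring
  · rw [if_neg hi, if_neg hi]; ring

def nullP (S₁ S₂ : Finset ι) : Submodule ℝ (Finset ι → ℝ) where
  carrier := {v | v ∅ = 0 ∧ v S₁ = 0 ∧ v S₂ = 0}
  add_mem' := by
    rintro a b ⟨ha1, ha2, ha3⟩ ⟨hb1, hb2, hb3⟩
    refine ⟨?_, ?_, ?_⟩ <;> simp [ha1, ha2, ha3, hb1, hb2, hb3]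
  zero_mem' := ⟨rfl, rfl, rfl⟩
  smul_mem' := by
    rintro c a ⟨ha1, ha2, ha3⟩
    refine ⟨?_, ?_, ?_⟩ <;> simp [ha1, ha2, ha3]

lemma delta_mem_nullP {S₁ S₂ T : Finset ι} (h0 : T ≠ ∅) (hT1 : T ≠ S₁) (hT2 : T ≠ S₂) :
    delta T ∈ nullP S₁ S₂ :=
  ⟨if_neg (fun h => h0 h.symm), if_neg (fun h => hT1 h.symm), if_neg (fun h => hT2 h.symm)⟩

lemma top_le_map (hn3 : 3 ≤ Fintype.card ι) (S₁ S₂ : Finset ι)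
    (h12 : S₁ ≠ S₂) (h1 : S₁ ≠ ∅) (h2 : S₂ ≠ ∅)
    (h1N : S₁ ≠ Finset.univ) (h2N : S₂ ≠ Finset.univ) :
    ∀ x : ι → ℝ, x ∈ (nullP S₁ S₂).map Phi := by
  classical
  have hn0 : (0:ℝ) < ((Fintype.card ι : ℕ) : ℝ) := by
    have : 0 < Fintype.card ι := by omega
    exact_mod_cast this
  set M := (nullP S₁ S₂).map Phi with hM
  have hPhiT_mem : ∀ T : Finset ι, T ≠ ∅ → T ≠ S₁ → T ≠ S₂ → Phi (delta T) ∈ M :=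
    fun T h0 hT1 hT2 => Submodule.mem_map_of_mem (delta_mem_nullP h0 hT1 hT2)
  have hApos : ∀ T : Finset ι, T.Nonempty →
      (0:ℝ) < ((Fintype.card ι : ℝ) * ((Fintype.card ι - 1).choose (T.card - 1)))⁻¹ := by
    intro T hT
    have hc : T.card ≤ Fintype.card ι := Finset.card_le_univ T
    have hchoose : 0 < (Fintype.card ι - 1).choose (T.card - 1) :=
      Nat.choose_pos (by omega)
    have : (0:ℝ) < ((Fintype.card ι - 1).choose (T.card - 1) : ℝ) := by exact_mod_cast hchoose
    exact inv_pos.mpr (mul_pos hn0 this)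
  have hBnonneg : ∀ T : Finset ι,
      (0:ℝ) ≤ ((Fintype.card ι : ℝ) * ((Fintype.card ι - 1).choose T.card))⁻¹ := by
    intro T
    positivity
  -- the constant function 1 is in M
  have huniv_ne : (Finset.univ : Finset ι) ≠ ∅ := by
    intro heq
    have := congrArg Finset.card heq
    rw [Finset.card_univ, Finset.card_empty] at this
    omega
  have ho : ind (Finset.univ : Finset ι) ∈ M := by
    have hB0 : ((Fintype.card ι : ℝ) * ((Fintype.card ι - 1).choose (Finset.univ : Finset ι).card))⁻¹ = 0 := by
      rw [Finset.card_univ, Nat.choose_eq_zero_of_lt (by omega), Nat.cast_zero, mul_zero, inv_zero]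
    have heq := phi_delta_eq (Finset.univ : Finset ι) (Finset.nonempty_iff_ne_empty.mpr huniv_ne)
    rw [hB0, add_zero, zero_smul, sub_zero] at heq
    have hA := hApos Finset.univ (Finset.nonempty_iff_ne_empty.mpr huniv_ne)
    have : ind (Finset.univ : Finset ι) =
        ((Fintype.card ι : ℝ) * ((Fintype.card ι - 1).choose ((Finset.univ : Finset ι).card - 1)))⁻¹⁻¹ • Phi (delta (Finset.univ : Finset ι)) := by
      rw [heq, smul_smul, inv_mul_cancel₀ (ne_of_gt hA), one_smul]
    rw [this]
    exact Submodule.smul_mem _ _ (hPhiT_mem _ huniv_ne (Ne.symm h1N) (Ne.symm h2N))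
  -- indicators of admissible sets are in M
  have hind : ∀ T : Finset ι, T.Nonempty → T ≠ S₁ → T ≠ S₂ → ind T ∈ M := by
    intro T hT hT1 hT2
    have hAB : (0:ℝ) < ((Fintype.card ι : ℝ) * ((Fintype.card ι - 1).choose (T.card - 1)))⁻¹
        + ((Fintype.card ι : ℝ) * ((Fintype.card ι - 1).choose T.card))⁻¹ :=
      lt_of_lt_of_le (hApos T hT) (le_add_of_nonneg_right (hBnonneg T))
    have heq := phi_delta_eq T hT
    have : ind T = (((Fintype.card ι : ℝ) * ((Fintype.card ι - 1).choose (T.card - 1)))⁻¹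
        + ((Fintype.card ι : ℝ) * ((Fintype.card ι - 1).choose T.card))⁻¹)⁻¹ •
        (Phi (delta T) + ((Fintype.card ι : ℝ) * ((Fintype.card ι - 1).choose T.card))⁻¹ • ind Finset.univ) := by
      rw [heq, sub_add_cancel, smul_smul, inv_mul_cancel₀ (ne_of_gt hAB), one_smul]
    rw [this]
    exact Submodule.smul_mem _ _ (Submodule.add_mem _
      (hPhiT_mem T hT.ne_empty hT1 hT2) (Submodule.smul_mem _ _ ho))
  -- singleton indicators are in M
  have hsing : ∀ j : ι, ind ({j} : Finset ι) ∈ M := by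
    intro j
    by_cases hj1 : ({j} : Finset ι) = S₁ ∨ ({j} : Finset ι) = S₂
    · by_cases hj2 : Finset.univ.erase j = S₁ ∨ Finset.univ.erase j = S₂
      · -- S₁, S₂ are exactly {j} and univ.erase j
        obtain ⟨z, hz⟩ := Fintype.exists_ne_of_one_lt_card (by omega) j
        have hcard_erase : (Finset.univ.erase j).card = Fintype.card ι - 1 := by
          rw [Finset.card_erase_of_mem (Finset.mem_univ j), Finset.card_univ]
        have hje : ({j} : Finset ι) ≠ Finset.univ.erase j := by
          intro hcontra
          have := congrArg Finset.card hcontra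
          rw [Finset.card_singleton, hcard_erase] at this
          omega
        have hpair : (S₁ = {j} ∧ S₂ = Finset.univ.erase j) ∨
            (S₂ = {j} ∧ S₁ = Finset.univ.erase j) := by
          rcases hj1 with h | h <;> rcases hj2 with h' | h'
          · exact absurd (h.trans h'.symm) hje
          · exact Or.inl ⟨h.symm, h'.symm⟩
          · exact Or.inr ⟨h.symm, h'.symm⟩
          · exact absurd (h.trans h'.symm) hje
        have hz1 : ({z} : Finset ι) ≠ S₁ ∧ ({z} : Finset ι) ≠ S₂ := by
          have hzj : ({z} : Finset ι) ≠ {j} := by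
            intro hc
            exact hz (Finset.singleton_injective hc)
          have hze : ({z} : Finset ι) ≠ Finset.univ.erase j := by
            intro hc
            have := congrArg Finset.card hc
            rw [Finset.card_singleton, hcard_erase] at this
            omega
          rcases hpair with ⟨ha, hb⟩ | ⟨ha, hb⟩
          · exact ⟨ha ▸ hzj, hb ▸ hze⟩
          · exact ⟨hb ▸ hze, ha ▸ hzj⟩
        have hp1 : ({j, z} : Finset ι) ≠ S₁ ∧ ({j, z} : Finset ι) ≠ S₂ := by
          have hpj : ({j, z} : Finset ι) ≠ {j} := by
            intro hc
            have : z ∈ ({j} : Finset ι) := hc ▸ (by simp : z ∈ ({j, z} : Finset ι))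
            exact hz (Finset.mem_singleton.mp this)
          have hpe : ({j, z} : Finset ι) ≠ Finset.univ.erase j := by
            intro hc
            have : j ∈ Finset.univ.erase j := hc ▸ (by simp : j ∈ ({j, z} : Finset ι))
            exact (Finset.notMem_erase j Finset.univ) this
          rcases hpair with ⟨ha, hb⟩ | ⟨ha, hb⟩
          · exact ⟨ha ▸ hpj, hb ▸ hpe⟩
          · exact ⟨hb ▸ hpe, ha ▸ hpj⟩
        have hmz : ind ({z} : Finset ι) ∈ M :=
          hind {z} (Finset.singleton_nonempty z) hz1.1 hz1.2
        have hmp : ind ({j, z} : Finset ι) ∈ M :=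
          hind {j, z} ⟨j, by simp⟩ hp1.1 hp1.2
        have hdecomp : ind ({j} : Finset ι) = ind ({j, z} : Finset ι) - ind ({z} : Finset ι) := by
          funext i
          simp only [ind, Pi.sub_apply, Finset.mem_insert, Finset.mem_singleton]
          by_cases hij : i = j
          · have : ¬ (i = z) := fun hc => hz (hc.symm.trans hij)
            simp [hij, this, Ne.symm hz]
          · by_cases hiz : i = z
            · simp [hij, hiz, hz]
            · simp [hij, hiz]
        rw [hdecomp]
        exact Submodule.sub_mem _ hmp hmz
      · push_neg at hj2
        have herase_ne : (Finset.univ.erase j : Finset ι).Nonempty := by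
          rw [← Finset.card_pos, Finset.card_erase_of_mem (Finset.mem_univ j), Finset.card_univ]
          omega
        have hme : ind (Finset.univ.erase j) ∈ M := hind _ herase_ne hj2.1 hj2.2
        have hdecomp : ind ({j} : Finset ι) = ind (Finset.univ : Finset ι) - ind (Finset.univ.erase j) := by
          funext i
          simp only [ind, Pi.sub_apply, Finset.mem_singleton, Finset.mem_erase, Finset.mem_univ,
            if_true, and_true]
          by_cases hij : i = j
          · simp [hij]
          · simp [hij]
        rw [hdecomp]
        exact Submodule.sub_mem _ ho hme
    · push_neg at hj1
      exact hind {j} (Finset.singleton_nonempty j) hj1.1 hj1.2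
  -- conclude
  intro x
  have hx : x = ∑ j : ι, x j • ind ({j} : Finset ι) := by
    funext i
    rw [Finset.sum_apply]
    simp only [Pi.smul_apply, smul_eq_mul, ind, Finset.mem_singleton]
    rw [Finset.sum_congr rfl (fun j _ => by rw [mul_ite, mul_one, mul_zero] :
      ∀ j ∈ Finset.univ, x j * (if i = j then (1:ℝ) else 0) = if i = j then x j else 0)]
    rw [Finset.sum_ite_eq Finset.univ i x, if_pos (Finset.mem_univ i)]
  rw [hx]
  exact Submodule.sum_mem _ (fun j _ => Submodule.smul_mem _ _ (hsing j))

lemma exists_null_game (hn3 : 3 ≤ Fintype.card ι) (S₁ S₂ : Finset ι)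
    (h12 : S₁ ≠ S₂) (h1 : S₁ ≠ ∅) (h2 : S₂ ≠ ∅)
    (h1N : S₁ ≠ Finset.univ) (h2N : S₂ ≠ Finset.univ) :
    ∃ v : Finset ι → ℝ, v ∅ = 0 ∧ v S₁ < v S₂ ∧ ∀ i, shapley v i = 0 := by
  obtain ⟨u, hu, hPhiu⟩ := Submodule.mem_map.mp
    (top_le_map hn3 S₁ S₂ h12 h1 h2 h1N h2N (Phi (delta S₂) - Phi (delta S₁)))
  obtain ⟨hu0, hu1, hu2⟩ := hu
  refine ⟨delta S₂ - delta S₁ - u, ?_, ?_, ?_⟩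
  · simp only [Pi.sub_apply, delta, hu0]
    rw [if_neg (fun hc : (∅ : Finset ι) = S₂ => h2 hc.symm),
      if_neg (fun hc : (∅ : Finset ι) = S₁ => h1 hc.symm)]
    ring
  · simp only [Pi.sub_apply, delta, hu1, hu2]
    rw [if_neg h12, if_neg (Ne.symm h12)]
    norm_num
  · intro i
    have hv : shapley (delta S₂ - delta S₁ - u) = Phi (delta S₂ - delta S₁ - u) := rfl
    rw [hv, map_sub, map_sub, hPhiu]
    simp

end Aux

/-- For any Shapley value-based hypothesis test `h : ℝ^N → [0,1]`, the sum of the true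
negative rate (infimum of `1 - h(φ(v))` over utility functions in the null hypothesis class)
and the true positive rate (infimum of `h(φ(v))` over utility functions in the alternative
hypothesis class) is at most `1`. -/
theorem stmt_1 {ι : Type*} [Fintype ι] [DecidableEq ι]
    (hn : 3 ≤ Fintype.card ι) (S₁ S₂ : Finset ι)
    (h12 : S₁ ≠ S₂) (h1 : S₁ ≠ ∅) (h2 : S₂ ≠ ∅)
    (h1N : S₁ ≠ Finset.univ) (h2N : S₂ ≠ Finset.univ)
    (h : (ι → ℝ) → ℝ) (hh : ∀ x, h x ∈ Set.Icc (0 : ℝ) 1) :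
    sInf {r : ℝ | ∃ v : Finset ι → ℝ, v ∅ = 0 ∧ v S₂ ≤ v S₁ ∧ r = 1 - h (shapley v)} +
      sInf {r : ℝ | ∃ v : Finset ι → ℝ, v ∅ = 0 ∧ v S₁ < v S₂ ∧ r = h (shapley v)} ≤ 1 := by
  classical
  obtain ⟨v₁, hv0, hvlt, hvs⟩ := exists_null_game hn S₁ S₂ h12 h1 h2 h1N h2N
  have h0 : ∀ i, shapley (fun _ : Finset ι => (0:ℝ)) i = 0 := by
    intro i
    have : shapley (fun _ : Finset ι => (0:ℝ)) = Phi (0 : Finset ι → ℝ) := rfl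
    rw [this, map_zero]
    rfl
  have hshap_eq : shapley v₁ = shapley (fun _ : Finset ι => (0:ℝ)) := by
    funext i
    rw [hvs i, h0 i]
  have hbddA : BddBelow {r : ℝ | ∃ v : Finset ι → ℝ, v ∅ = 0 ∧ v S₂ ≤ v S₁ ∧ r = 1 - h (shapley v)} := by
    refine ⟨0, fun r hr => ?_⟩
    obtain ⟨v, _, _, hr⟩ := hr
    have := (hh (shapley v)).2
    rw [hr]
    linarith
  have hbddB : BddBelow {r : ℝ | ∃ v : Finset ι → ℝ, v ∅ = 0 ∧ v S₁ < v S₂ ∧ r = h (shapley v)} := by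
    refine ⟨0, fun r hr => ?_⟩
    obtain ⟨v, _, _, hr⟩ := hr
    have := (hh (shapley v)).1
    rw [hr]
    linarith
  have hA : sInf {r : ℝ | ∃ v : Finset ι → ℝ, v ∅ = 0 ∧ v S₂ ≤ v S₁ ∧ r = 1 - h (shapley v)} ≤
      1 - h (shapley (fun _ : Finset ι => (0:ℝ))) :=
    csInf_le hbddA ⟨fun _ => 0, rfl, le_refl _, rfl⟩
  have hB : sInf {r : ℝ | ∃ v : Finset ι → ℝ, v ∅ = 0 ∧ v S₁ < v S₂ ∧ r = h (shapley v)} ≤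
      h (shapley (fun _ : Finset ι => (0:ℝ))) := by
    refine csInf_le hbddB ⟨v₁, hv0, hvlt, ?_⟩
    rw [hshap_eq]
  linarith
end

section
/- Let N be a finite set with |N| = n ≥ 1 and let T ⊆ N with |T| ≥ 2. Then the commander's game ū_T has Shapley value zero: φ_i(ū_T) = 0 for every i ∈ N. -/
open Finset

/-- The commander's game `ū_T`: `ū_T(S) = 1` if `|S ∩ T| = 1` and `0` otherwise. -/
def commander {ι : Type*} [DecidableEq ι] (T S : Finset ι) : ℝ :=
  if (S ∩ T).card = 1 then 1 else 0

/-! Auxiliary combinatorial lemmas. -/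

open Nat

lemma hockey (N r : ℕ) : ∑ j ∈ range N, j.choose r = N.choose (r+1) := by
  induction N with
  | zero => simp
  | succ N ih => rw [Finset.sum_range_succ, ih, Nat.choose_succ_succ']; ring

lemma lemK (N r : ℕ) : ∑ j ∈ range N, (N - 1 - j) * j.choose r = N.choose (r+2) := by
  induction N with
  | zero => simp
  | succ N ih =>
    rw [Finset.sum_range_succ]
    simp only [Nat.add_sub_cancel]
    rw [Nat.sub_self, zero_mul, add_zero]
    have : ∀ j ∈ range N, (N - j) * j.choose r
        = (N - 1 - j) * j.choose r + j.choose r := by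
      intro j hj
      simp only [mem_range] at hj
      have : N - j = (N - 1 - j) + 1 := by omega
      rw [this]; ring
    rw [Finset.sum_congr rfl this, Finset.sum_add_distrib, ih, hockey,
      Nat.choose_succ_succ' N (r+1)]
    ring

lemma cleanL1 (m s u : ℕ) :
    (((m+s+1+u).choose m : ℝ))⁻¹ * ((m+u).choose m)
      = (((m+s+1+u).choose (s+1) : ℝ))⁻¹ * ((s+1+u).choose (s+1)) := by
  have e1 : m + s + 1 + u = m + (s+1+u) := by ring
  have e2 : m + s + 1 + u = (s+1) + (m+u) := by ring
  have c1 : ((m+s+1+u).choose m : ℝ) = (m+s+1+u) ! / (m ! * (s+1+u) !) := by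
    rw [e1]; exact Nat.cast_add_choose ℝ
  have c2 : ((m+s+1+u).choose (s+1) : ℝ) = (m+s+1+u) ! / ((s+1) ! * (m+u) !) := by
    rw [e2, Nat.cast_add_choose ℝ] <;> rw [← e2]
  have c3 : ((m+u).choose m : ℝ) = (m+u) ! / (m ! * u !) := Nat.cast_add_choose ℝ
  have c4 : ((s+1+u).choose (s+1) : ℝ) = (s+1+u) ! / ((s+1) ! * u !) := Nat.cast_add_choose ℝ
  rw [c1, c2, c3, c4]
  have f1 := Nat.factorial_ne_zero (m+s+1+u)
  have f2 := Nat.factorial_ne_zero m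
  have f3 := Nat.factorial_ne_zero (s+1+u)
  have f4 := Nat.factorial_ne_zero (s+1)
  have f5 := Nat.factorial_ne_zero (m+u)
  have f6 := Nat.factorial_ne_zero u
  field_simp

lemma cleanL2 (m s u : ℕ) :
    (((m+s+1+u).choose (m+1) : ℝ))⁻¹ * ((s+1) * ((m+u).choose m))
      = (((m+s+1+u).choose (s+1) : ℝ))⁻¹ * ((m+1) * ((s+u).choose s)) := by
  have e1 : m + s + 1 + u = (m+1) + (s+u) := by ring
  have e2 : m + s + 1 + u = (s+1) + (m+u) := by ring
  have c1 : ((m+s+1+u).choose (m+1) : ℝ) = ((m+s+1+u) ! : ℝ) / ((m+1) ! * (s+u) !) := by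
    rw [e1, Nat.cast_add_choose ℝ] <;> rw [← e1]
  have c2 : ((m+s+1+u).choose (s+1) : ℝ) = ((m+s+1+u) ! : ℝ) / ((s+1) ! * (m+u) !) := by
    rw [e2, Nat.cast_add_choose ℝ] <;> rw [← e2]
  have c3 : ((m+u).choose m : ℝ) = ((m+u) ! : ℝ) / (m ! * u !) := Nat.cast_add_choose ℝ
  have c4 : ((s+u).choose s : ℝ) = ((s+u) ! : ℝ) / (s ! * u !) := Nat.cast_add_choose ℝ
  have f1 := Nat.factorial_ne_zero (m+s+1+u)
  have f2 := Nat.factorial_ne_zero (m+u)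
  have f3 := Nat.factorial_ne_zero (s+u)
  have f6 := Nat.factorial_ne_zero m
  have f7 := Nat.factorial_ne_zero u
  have f8 := Nat.factorial_ne_zero s
  rw [c1, c2, c3, c4, Nat.factorial_succ m, Nat.factorial_succ s]
  push_cast
  field_simp

lemma ratioL1 {n t m : ℕ} (ht2 : 2 ≤ t) (htn : t ≤ n) (hm : m < n) :
    ((n-1).choose m : ℝ)⁻¹ * ((n-t).choose m)
      = ((n-1).choose (t-1) : ℝ)⁻¹ * ((n-1-m).choose (t-1)) := by
  by_cases h : m ≤ n - t
  · obtain ⟨s, hs⟩ : ∃ s, t = s + 2 := ⟨t-2, by omega⟩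
    obtain ⟨u, hu⟩ : ∃ u, n - t = m + u := ⟨n-t-m, by omega⟩
    have h3 : n - 1 - m = s + 1 + u := by omega
    have h2 : t - 1 = s + 1 := by omega
    have h1 : n - 1 = m + s + 1 + u := by omega
    rw [h3, h2, hu, h1]
    exact cleanL1 m s u
  · have e1 : (n-t).choose m = 0 := Nat.choose_eq_zero_of_lt (by omega)
    have e2 : (n-1-m).choose (t-1) = 0 := Nat.choose_eq_zero_of_lt (by omega)
    rw [e1, e2]; simp

lemma ratioL2 {n t m : ℕ} (ht2 : 2 ≤ t) (htn : t ≤ n) (hm1 : 1 ≤ m) (hm : m < n) :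
    ((n-1).choose m : ℝ)⁻¹ * (((t-1) * ((n-t).choose (m-1)) : ℕ) : ℝ)
      = ((n-1).choose (t-1) : ℝ)⁻¹ * ((m * ((n-1-m).choose (t-2)) : ℕ) : ℝ) := by
  by_cases h : m - 1 ≤ n - t
  · obtain ⟨s, hs⟩ : ∃ s, t = s + 2 := ⟨t-2, by omega⟩
    obtain ⟨m', hm'⟩ : ∃ m', m = m' + 1 := ⟨m-1, by omega⟩
    obtain ⟨u, hu⟩ : ∃ u, n - t = m' + u := ⟨n-t-m', by omega⟩
    have h3 : n - 1 - m = s + u := by omega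
    have h2 : t - 1 = s + 1 := by omega
    have h2' : t - 2 = s := by omega
    have h4 : m - 1 = m' := by omega
    have h1 : n - 1 = m' + s + 1 + u := by omega
    rw [h3, h2, h2', h4, hu, h1, hm']
    push_cast
    exact cleanL2 m' s u
  · have e1 : (t-1) * ((n-t).choose (m-1)) = 0 := by
      rw [Nat.choose_eq_zero_of_lt (by omega)]; ring
    have e2 : m * ((n-1-m).choose (t-2)) = 0 := by
      rw [Nat.choose_eq_zero_of_lt (by omega)]; ring
    rw [e1, e2]; simp

theorem stmt_2 {ι : Type*} [Fintype ι] [DecidableEq ι]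
    (hn : 1 ≤ Fintype.card ι) (T : Finset ι) (hT : 2 ≤ T.card) :
    ∀ i : ι, shapley (commander T) i = 0 := by
  intro i
  unfold shapley
  by_cases hiT : i ∈ T
  swap
  · -- i ∉ T : every marginal contribution vanishes
    rw [Finset.sum_eq_zero, mul_zero]
    intro k _
    rw [Finset.sum_eq_zero, mul_zero]
    intro S _
    unfold commander
    rw [Finset.insert_inter_of_notMem hiT, sub_self]
  -- i ∈ T
  set n := Fintype.card ι with hndef
  set t := T.card with htdef
  have htn : t ≤ n := by
    rw [htdef, hndef, ← Finset.card_univ]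
    exact Finset.card_le_card (Finset.subset_univ T)
  -- the two counting results
  have hA : ∀ m : ℕ,
      (((Finset.univ.erase i).powerset.filter (fun S => S.card = m)).filter
        (fun S => (S ∩ T).card = 0)) = Tᶜ.powersetCard m := by
    intro m
    ext S
    simp only [Finset.mem_filter, Finset.mem_powerset, Finset.mem_powersetCard,
      Finset.card_eq_zero]
    constructor
    · rintro ⟨⟨hsub, hcard⟩, hint⟩
      refine ⟨fun x hx => ?_, hcard⟩
      rw [Finset.mem_compl]
      intro hxT
      have : x ∈ S ∩ T := Finset.mem_inter.mpr ⟨hx, hxT⟩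
      rw [hint] at this
      exact Finset.notMem_empty x this
    · rintro ⟨hsub, hcard⟩
      have hint : S ∩ T = ∅ := by
        ext x
        simp only [Finset.mem_inter, Finset.notMem_empty, iff_false, not_and]
        intro hxS hxT
        exact (Finset.mem_compl.mp (hsub hxS)) hxT
      refine ⟨⟨fun x hx => Finset.mem_erase.mpr ⟨?_, Finset.mem_univ x⟩, hcard⟩, hint⟩
      rintro rfl
      exact (Finset.mem_compl.mp (hsub hx)) hiT
  have hB : ∀ m : ℕ, 1 ≤ m →
      ((((Finset.univ.erase i).powerset.filter (fun S => S.card = m)).filter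
        (fun S => (S ∩ T).card = 1))).card = (t-1) * (n-t).choose (m-1) := by
    intro m hm
    have hbij := Finset.card_bij
      (s := (T.erase i) ×ˢ (Tᶜ.powersetCard (m-1)))
      (t := (((Finset.univ.erase i).powerset.filter (fun S => S.card = m)).filter
        (fun S => (S ∩ T).card = 1)))
      (i := fun p _ => insert p.1 p.2)
      (by -- maps into
        rintro ⟨j, S'⟩ hp
        rw [Finset.mem_product] at hp
        obtain ⟨hj, hS'⟩ := hp
        rw [Finset.mem_erase] at hj
        rw [Finset.mem_powersetCard] at hS'
        have hjT : j ∈ T := hj.2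
        have hjS' : j ∉ S' := fun h => (Finset.mem_compl.mp (hS'.1 h)) hjT
        have hinterT : insert j S' ∩ T = {j} := by
          ext x
          simp only [Finset.mem_inter, Finset.mem_insert, Finset.mem_singleton]
          constructor
          · rintro ⟨hx1 | hx2, hxT⟩
            · exact hx1
            · exact absurd hxT (Finset.mem_compl.mp (hS'.1 hx2))
          · rintro rfl; exact ⟨Or.inl rfl, hjT⟩
        simp only [Finset.mem_filter, Finset.mem_powerset]
        refine ⟨⟨?_, ?_⟩, ?_⟩
        · intro x hx
          rcases Finset.mem_insert.mp hx with rfl | hx2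
          · exact Finset.mem_erase.mpr ⟨hj.1, Finset.mem_univ x⟩
          · refine Finset.mem_erase.mpr ⟨?_, Finset.mem_univ x⟩
            rintro rfl
            exact (Finset.mem_compl.mp (hS'.1 hx2)) hiT
        · rw [Finset.card_insert_of_notMem hjS', hS'.2]
          omega
        · rw [hinterT, Finset.card_singleton])
      (by -- injective
        rintro ⟨j, S'⟩ hp ⟨j', S''⟩ hq heq
        rw [Finset.mem_product, Finset.mem_erase, Finset.mem_powersetCard] at hp hq
        have hjS' : j ∉ S' := fun h => (Finset.mem_compl.mp (hp.2.1 h)) hp.1.2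
        have hjS'' : j' ∉ S'' := fun h => (Finset.mem_compl.mp (hq.2.1 h)) hq.1.2
        have hint1 : insert j S' ∩ T = {j} := by
          ext x
          simp only [Finset.mem_inter, Finset.mem_insert, Finset.mem_singleton]
          constructor
          · rintro ⟨hx1 | hx2, hxT⟩
            · exact hx1
            · exact absurd hxT (Finset.mem_compl.mp (hp.2.1 hx2))
          · rintro rfl; exact ⟨Or.inl rfl, hp.1.2⟩
        have hint2 : insert j' S'' ∩ T = {j'} := by
          ext x
          simp only [Finset.mem_inter, Finset.mem_insert, Finset.mem_singleton]
          constructor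
          · rintro ⟨hx1 | hx2, hxT⟩
            · exact hx1
            · exact absurd hxT (Finset.mem_compl.mp (hq.2.1 hx2))
          · rintro rfl; exact ⟨Or.inl rfl, hq.1.2⟩
        have heq2 : insert j S' = insert j' S'' := heq
        have hjj : j = j' := by
          have : ({j} : Finset ι) = {j'} := by rw [← hint1, ← hint2, heq2]
          simpa using this
        subst hjj
        have hSS : S' = S'' := by
          rw [← Finset.erase_insert hjS', ← Finset.erase_insert hjS'', heq2]
        rw [hSS])
      (by -- surjective
        intro S hS
        simp only [Finset.mem_filter, Finset.mem_powerset] at hS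
        obtain ⟨⟨hsub, hcard⟩, hone⟩ := hS
        obtain ⟨j, hj⟩ := Finset.card_eq_one.mp hone
        have hjS : j ∈ S ∧ j ∈ T := by
          have : j ∈ S ∩ T := by rw [hj]; exact Finset.mem_singleton_self j
          exact Finset.mem_inter.mp this
        have hji : j ≠ i := by
          rintro rfl
          exact (Finset.mem_erase.mp (hsub hjS.1)).1 rfl
        refine ⟨⟨j, S.erase j⟩, ?_, ?_⟩
        · rw [Finset.mem_product]
          refine ⟨Finset.mem_erase.mpr ⟨hji, hjS.2⟩, ?_⟩
          rw [Finset.mem_powersetCard]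
          constructor
          · intro x hx
            rw [Finset.mem_erase] at hx
            rw [Finset.mem_compl]
            intro hxT
            have : x ∈ S ∩ T := Finset.mem_inter.mpr ⟨hx.2, hxT⟩
            rw [hj] at this
            exact hx.1 (Finset.mem_singleton.mp this)
          · rw [Finset.card_erase_of_mem hjS.1, hcard]
        · exact Finset.insert_erase hjS.1)
    rw [← hbij, Finset.card_product, Finset.card_erase_of_mem hiT,
      Finset.card_powersetCard, Finset.card_compl]
  have hB0 : ((((Finset.univ.erase i).powerset.filter (fun S => S.card = 0)).filter
      (fun S => (S ∩ T).card = 1))).card = 0 := by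
    rw [Finset.card_eq_zero, Finset.eq_empty_iff_forall_notMem]
    intro S hS
    simp only [Finset.mem_filter, Finset.mem_powerset, Finset.card_eq_zero] at hS
    obtain ⟨⟨-, rfl⟩, h1⟩ := hS
    simp at h1
  -- rewrite each inner sum as a difference of two cardinalities
  have hinner : ∀ m : ℕ,
      ∑ S ∈ (Finset.univ.erase i).powerset.filter (fun S => S.card = m),
        (commander T (insert i S) - commander T S)
      = (((((Finset.univ.erase i).powerset.filter (fun S => S.card = m)).filter
            (fun S => (S ∩ T).card = 0))).card : ℝ)
        - (((((Finset.univ.erase i).powerset.filter (fun S => S.card = m)).filter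
            (fun S => (S ∩ T).card = 1))).card : ℝ) := by
    intro m
    have hterm : ∀ S ∈ (Finset.univ.erase i).powerset.filter (fun S => S.card = m),
        commander T (insert i S) - commander T S
          = ((if (S ∩ T).card = 0 then (1:ℝ) else 0)
              - (if (S ∩ T).card = 1 then (1:ℝ) else 0)) := by
      intro S hS
      simp only [Finset.mem_filter, Finset.mem_powerset] at hS
      have hiS : i ∉ S := fun h => (Finset.mem_erase.mp (hS.1 h)).1 rfl
      have h1 : insert i S ∩ T = insert i (S ∩ T) := Finset.insert_inter_of_mem hiT
      have h2 : (insert i S ∩ T).card = (S ∩ T).card + 1 := by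
        rw [h1, Finset.card_insert_of_notMem (fun h => hiS (Finset.mem_inter.mp h).1)]
      unfold commander
      rw [h2]
      congr 1
      exact if_congr (by omega) rfl rfl
    rw [Finset.sum_congr rfl hterm, Finset.sum_sub_distrib, Finset.sum_boole,
      Finset.sum_boole]
  -- reduce to a sum over `range n`
  rw [_root_.mul_eq_zero]
  right
  rw [show Finset.Icc 1 n = Finset.Ico 1 (n+1) by rw [Finset.Ico_add_one_right_eq_Icc],
    Finset.sum_Ico_eq_sum_range]
  simp only [Nat.add_sub_cancel, Nat.add_sub_cancel_left]
  have key : ∀ m ∈ range n,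
      ((n-1).choose m : ℝ)⁻¹ *
        ∑ S ∈ (Finset.univ.erase i).powerset.filter (fun S => S.card = m),
          (commander T (insert i S) - commander T S)
      = ((n-1).choose (t-1) : ℝ)⁻¹ *
          (((n-1-m).choose (t-1) : ℝ) - ((m * ((n-1-m).choose (t-2)) : ℕ) : ℝ)) := by
    intro m hm
    rw [Finset.mem_range] at hm
    rw [hinner m, hA m, Finset.card_powersetCard, Finset.card_compl, mul_sub, mul_sub]
    congr 1
    · exact ratioL1 hT htn hm
    · rcases Nat.eq_zero_or_pos m with rfl | hm1
      · rw [hB0]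
        simp
      · rw [hB m hm1]
        exact ratioL2 hT htn hm1 hm
  rw [Finset.sum_congr rfl (fun m hm => key m hm), ← Finset.mul_sum,
    Finset.sum_sub_distrib]
  have s1 : ∑ m ∈ range n, ((n-1-m).choose (t-1) : ℝ) = (n.choose t : ℝ) := by
    rw [← Nat.cast_sum]
    congr 1
    rw [Finset.sum_range_reflect (fun j => j.choose (t-1)) n, hockey]
    congr 1
    omega
  have s2 : ∑ m ∈ range n, ((m * ((n-1-m).choose (t-2)) : ℕ) : ℝ) = (n.choose t : ℝ) := by
    rw [← Nat.cast_sum]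
    congr 1
    have hc : ∀ m ∈ range n, m * ((n-1-m).choose (t-2))
        = (fun j => (n - 1 - j) * j.choose (t-2)) (n - 1 - m) := by
      intro m hm
      rw [Finset.mem_range] at hm
      simp only
      congr 1
      omega
    rw [Finset.sum_congr rfl hc, Finset.sum_range_reflect
      (fun j => (n - 1 - j) * j.choose (t-2)) n, lemK]
    congr 1
    omega
  rw [s1, s2, sub_self, mul_zero]
end

section
/- Let N be a finite set with |N| = n ≥ 1 and let v be any utility function on N with Shapley vector s = φ(v). Then there exist real coefficients α_T, indexed by the subsets T ⊆ N with |T| ≥ 2, such that for every S ⊆ N: v(S) = Σ_{i∈S} s_i + Σ_{T ⊆ N, |T| ≥ 2} α_T · ū_T(S). -/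
open Finset

noncomputable def F (m r : ℕ) : ℝ :=
  ∑ j ∈ range (m + 1), (m.choose j : ℝ) * (-1) ^ j / (r + j)

lemma F_rec (m r : ℕ) : F (m + 1) r = F m r - F m (r + 1) := by
  have h0 : F (m+1) r
      = ∑ j ∈ range (m+1), ((m+1).choose (j+1) : ℝ) * (-1)^(j+1) / (r + (j+1)) + 1 / r := by
    rw [F, Finset.sum_range_succ' (fun j => ((m+1).choose j : ℝ) * (-1)^j / (r + j)) (m+1)]
    simp
  have h1 : ∀ j, ((m+1).choose (j+1) : ℝ) = (m.choose j : ℝ) + (m.choose (j+1) : ℝ) := by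
    intro j; rw [Nat.choose_succ_succ]; push_cast; ring
  have h2 : ∑ j ∈ range (m+1), ((m+1).choose (j+1) : ℝ) * (-1)^(j+1) / (r + (j+1))
      = (∑ j ∈ range (m+1), (m.choose j : ℝ) * (-1)^(j+1) / ((r+1) + j))
      + ∑ j ∈ range (m+1), (m.choose (j+1) : ℝ) * (-1)^(j+1) / (r + (j+1)) := by
    rw [← Finset.sum_add_distrib]
    refine Finset.sum_congr rfl fun j _ => ?_
    rw [h1]; push_cast; ring
  have h3 : ∑ j ∈ range (m+1), (m.choose j : ℝ) * (-1)^(j+1) / ((r+1) + j)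
      = - F m (r+1) := by
    rw [F, ← Finset.sum_neg_distrib]
    refine Finset.sum_congr rfl fun j _ => ?_
    push_cast; ring
  have h4 : ∑ j ∈ range (m+1), (m.choose (j+1) : ℝ) * (-1)^(j+1) / (r + (j+1))
      = F m r - 1 / r := by
    have e1 : ∑ j ∈ range (m+1), (m.choose (j+1) : ℝ) * (-1)^(j+1) / (r + (j+1))
        = ∑ j ∈ range m, (m.choose (j+1) : ℝ) * (-1)^(j+1) / (r + (j+1)) := by
      rw [Finset.sum_range_succ]
      simp [Nat.choose_succ_self]
    have e2 : F m r = 1 / r + ∑ j ∈ range m, (m.choose (j+1) : ℝ) * (-1)^(j+1) / (r + (j+1)) := by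
      rw [F, Finset.sum_range_succ' (fun j => (m.choose j : ℝ) * (-1)^j / (r + j)) m]
      have : ((m.choose 0 : ℝ) * (-1)^0 / ((r : ℝ) + (0:ℕ))) = 1 / r := by simp
      rw [this, add_comm]
      congr 1
      refine Finset.sum_congr rfl fun j _ => ?_
      push_cast; ring
    rw [e1, e2]; ring
  rw [h0, h2, h3, h4]; ring

lemma F_eq (m : ℕ) : ∀ r : ℕ, 1 ≤ r →
    F m r = ((r-1).factorial : ℝ) * (m.factorial : ℝ) / ((r+m).factorial : ℝ) := by
  induction m with
  | zero =>
    intro r hr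
    obtain ⟨r', rfl⟩ := Nat.exists_eq_add_of_le hr
    rw [F]
    rw [show (0:ℕ)+1 = 1 from rfl, Finset.sum_range_one]
    simp only [Nat.choose_self, Nat.cast_one, pow_zero, Nat.cast_zero]
    rw [show 1+r'-1 = r' by omega, show 1+r'+0 = r'+1 by omega, Nat.factorial_succ]
    rw [eq_div_iff (by positivity)]
    have h : (1:ℝ)+r' ≠ 0 := by positivity
    push_cast
    field_simp
    ring
  | succ m ih =>
    intro r hr
    obtain ⟨r', rfl⟩ := Nat.exists_eq_add_of_le hr
    rw [F_rec, ih _ hr, ih _ (by omega)]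
    have h1 : ((1 + r' + (m+1)).factorial : ℝ) = (1 + r' + (m+1)) * ((1+r'+m).factorial) := by
      rw [show 1 + r' + (m+1) = (1 + r' + m) + 1 by omega, Nat.factorial_succ]; push_cast; ring
    have h2 : ((1 + r' + 1 - 1).factorial : ℝ) = (1 + r') * ((1 + r' - 1).factorial) := by
      rw [show 1 + r' + 1 - 1 = r' + 1 by omega, show 1 + r' - 1 = r' by omega, Nat.factorial_succ]
      push_cast; ring
    have h3 : (((m+1)).factorial : ℝ) = (m+1) * m.factorial := by
      rw [Nat.factorial_succ]; push_cast; ring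
    have e1 : 1 + r' + 1 + m = 1 + r' + (m + 1) := by ring
    rw [e1, h1, h2, h3]
    have hf : ((1+r'+m).factorial : ℝ) ≠ 0 := by positivity
    have hr1 : ((1:ℝ)+r'+(m+1)) ≠ 0 := by positivity
    field_simp
    ring

section Aux
variable {ι : Type*} [Fintype ι] [DecidableEq ι]

lemma neg_one_sq_pow (r : ℕ) : (-1:ℝ)^r * (-1)^r = 1 := by
  rcases Nat.even_or_odd r with h | h <;> simp [h.neg_one_pow]

lemma sum_pow_neg_one {α : Type*} [DecidableEq α] (s : Finset α) :
    ∑ t ∈ s.powerset, (-1:ℝ)^t.card = if s = ∅ then 1 else 0 := by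
  have h := Finset.sum_powerset_neg_one_pow_card (x := s)
  have h2 : ((∑ m ∈ s.powerset, (-1:ℤ)^m.card : ℤ) : ℝ)
      = ((if s = ∅ then (1:ℤ) else 0 : ℤ) : ℝ) := by exact_mod_cast h
  push_cast at h2
  convert h2 using 2

noncomputable def dvd' (v : Finset ι → ℝ) (U : Finset ι) : ℝ :=
  ∑ R ∈ U.powerset, (-1:ℝ)^U.card * (-1)^R.card * v R

lemma sum_between (R S : Finset ι) (hRS : R ⊆ S) :
    ∑ U ∈ S.powerset.filter (fun U => R ⊆ U), (-1:ℝ)^U.card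
      = (-1:ℝ)^R.card * (if R = S then 1 else 0) := by
  have h1 : ∑ U ∈ S.powerset.filter (fun U => R ⊆ U), (-1:ℝ)^U.card
      = ∑ W ∈ (S \ R).powerset, (-1:ℝ)^R.card * (-1)^W.card := by
    refine Finset.sum_nbij' (fun U => U \ R) (fun W => R ∪ W) ?_ ?_ ?_ ?_ ?_
    · intro U hU
      simp only [mem_filter, mem_powerset] at hU
      simp only [mem_powerset]
      exact Finset.sdiff_subset_sdiff hU.1 (le_refl R)
    · intro W hW
      simp only [mem_powerset] at hW
      simp only [mem_filter, mem_powerset]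
      constructor
      · exact Finset.union_subset hRS (hW.trans (Finset.sdiff_subset))
      · exact Finset.subset_union_left
    · intro U hU
      simp only [mem_filter, mem_powerset] at hU
      exact Finset.union_sdiff_of_subset hU.2
    · intro W hW
      simp only [mem_powerset] at hW
      exact Finset.union_sdiff_cancel_left (Finset.disjoint_left.mpr
        fun x hxR hxW => (Finset.mem_sdiff.mp (hW hxW)).2 hxR)
    · intro U hU
      simp only [mem_filter, mem_powerset] at hU
      have : U.card = R.card + (U \ R).card := by
        rw [← Finset.card_union_of_disjoint Finset.disjoint_sdiff,
          Finset.union_sdiff_of_subset hU.2]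
      rw [this, pow_add]
  rw [h1, ← Finset.mul_sum, sum_pow_neg_one]
  congr 1
  have : S \ R = ∅ ↔ R = S := by
    rw [Finset.sdiff_eq_empty_iff_subset]
    exact ⟨fun h => Finset.Subset.antisymm hRS h, fun h => h ▸ le_refl _⟩
  by_cases h : R = S <;> simp [h, this]

lemma sum_dvd' (v : Finset ι → ℝ) (S : Finset ι) :
    ∑ U ∈ S.powerset, dvd' v U = v S := by
  have h1 : ∀ U ∈ S.powerset, dvd' v U
      = ∑ R ∈ S.powerset, (if R ⊆ U then (-1:ℝ)^U.card * (-1)^R.card * v R else 0) := by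
    intro U hU
    simp only [mem_powerset] at hU
    have hp : U.powerset = S.powerset.filter (fun R => R ⊆ U) := by
      ext R
      simp only [mem_powerset, mem_filter]
      exact ⟨fun h => ⟨h.trans hU, h⟩, fun h => h.2⟩
    rw [dvd', hp, Finset.sum_filter]
  rw [Finset.sum_congr rfl h1, Finset.sum_comm]
  have h2 : ∀ R ∈ S.powerset,
      ∑ U ∈ S.powerset, (if R ⊆ U then (-1:ℝ)^U.card * (-1)^R.card * v R else 0)
        = (if R = S then 1 else 0) * v R := by
    intro R hR
    simp only [mem_powerset] at hR
    rw [← Finset.sum_filter]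
    have e : ∀ U ∈ S.powerset.filter (fun U => R ⊆ U),
        (-1:ℝ)^U.card * (-1)^R.card * v R = (-1:ℝ)^U.card * ((-1)^R.card * v R) :=
      fun U _ => by ring
    rw [Finset.sum_congr rfl e, ← Finset.sum_mul, sum_between R S hR]
    by_cases h : R = S
    · subst h
      simp only [if_true]
      linear_combination v R * neg_one_sq_pow R.card
    · simp [h]
  rw [Finset.sum_congr rfl h2]
  have : ∀ R ∈ S.powerset, (if R = S then (1:ℝ) else 0) * v R
      = if R = S then v R else 0 := by
    intro R _; by_cases h : R = S <;> simp [h]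
  rw [Finset.sum_congr rfl this, Finset.sum_ite_eq' S.powerset S v]
  simp

lemma supersum (R : Finset ι) (hR : R.Nonempty) :
    ∑ U ∈ univ.filter (fun U : Finset ι => R ⊆ U), (-1:ℝ)^U.card * (-1)^R.card / U.card
      = ((R.card - 1).factorial : ℝ) * (((Fintype.card ι - R.card).factorial : ℕ) : ℝ)
        / ((Fintype.card ι).factorial : ℝ) := by
  have hcard : R.card ≤ Fintype.card ι := R.card_le_univ.trans_eq (by simp)
  have h1 : ∑ U ∈ univ.filter (fun U : Finset ι => R ⊆ U),
        (-1:ℝ)^U.card * (-1)^R.card / U.card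
      = ∑ W ∈ Rᶜ.powerset, (-1:ℝ)^W.card / (R.card + W.card) := by
    refine Finset.sum_nbij' (fun U => U \ R) (fun W => R ∪ W) ?_ ?_ ?_ ?_ ?_
    · intro U hU
      simp only [mem_filter, mem_univ, true_and] at hU
      simp only [mem_powerset]
      intro x hx
      simp only [mem_sdiff] at hx
      simp [hx.2]
    · intro W _; simp
    · intro U hU
      simp only [mem_filter, mem_univ, true_and] at hU
      exact Finset.union_sdiff_of_subset hU
    · intro W hW
      simp only [mem_powerset] at hW
      exact Finset.union_sdiff_cancel_left (Finset.disjoint_left.mpr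
        fun x hxR hxW => (mem_compl.mp (hW hxW)) hxR)
    · intro U hU
      simp only [mem_filter, mem_univ, true_and] at hU
      have hdisj : Disjoint R (U \ R) := Finset.disjoint_sdiff
      have hcardU : U.card = R.card + (U \ R).card := by
        rw [← Finset.card_union_of_disjoint hdisj, Finset.union_sdiff_of_subset hU]
      have key : ∀ (a b : ℕ), (-1:ℝ)^(a+b) * (-1)^a = (-1)^b := by
        intro a b
        rcases Nat.even_or_odd a with h | h <;> simp [pow_add, h.neg_one_pow] <;> ring
      rw [hcardU, Nat.cast_add, key]
  rw [h1, Finset.sum_powerset]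
  have hc : Rᶜ.card = Fintype.card ι - R.card := by
    rw [Finset.card_compl]
  have h2 : ∀ j ∈ range (Rᶜ.card + 1),
      ∑ W ∈ powersetCard j Rᶜ, (-1:ℝ)^W.card / (R.card + W.card)
        = ((Fintype.card ι - R.card).choose j : ℝ) * (-1)^j / (R.card + j) := by
    intro j _
    have e : ∀ W ∈ powersetCard j Rᶜ, (-1:ℝ)^W.card / ((R.card : ℝ) + W.card) = (-1)^j / (R.card + j) := by
      intro W hW; rw [(Finset.mem_powersetCard.mp hW).2]
    rw [Finset.sum_congr rfl e, Finset.sum_const, Finset.card_powersetCard, hc, nsmul_eq_mul]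
    ring
  rw [Finset.sum_congr rfl h2, hc]
  have := F_eq (Fintype.card ι - R.card) R.card (Finset.card_pos.mpr hR)
  rw [F] at this
  rw [this, Nat.add_sub_cancel' hcard]

lemma coeff_eq (n r : ℕ) (h1 : 1 ≤ r) (h2 : r ≤ n) :
    (n : ℝ)⁻¹ * ((n - 1).choose (r - 1) : ℝ)⁻¹
      = ((r-1).factorial : ℝ) * ((n - r).factorial : ℝ) / (n.factorial : ℝ) := by
  have key : (n-1).choose (r-1) * (r-1).factorial * (n - r).factorial = (n-1).factorial := by
    have := Nat.choose_mul_factorial_mul_factorial (show r - 1 ≤ n - 1 by omega)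
    rwa [show n - 1 - (r - 1) = n - r by omega] at this
  have hnf : (n.factorial : ℝ) = n * (n-1).factorial := by
    rw [show n = (n-1) + 1 by omega, Nat.factorial_succ]
    push_cast [show n - 1 + 1 = n by omega]
    ring
  have hc : ((n-1).choose (r-1) : ℝ) ≠ 0 := by
    have h : 0 < ((n-1).choose (r-1) : ℝ) :=
      Nat.cast_pos.mpr (Nat.choose_pos (show r - 1 ≤ n - 1 by omega))
    exact h.ne'
  have hn0 : (n : ℝ) ≠ 0 := by
    have : (0:ℝ) < n := by exact_mod_cast Nat.lt_of_lt_of_le Nat.zero_lt_one (h1.trans h2)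
    exact this.ne'
  have hkey : ((n-1).choose (r-1) : ℝ) * (r-1).factorial * (n - r).factorial
      = ((n-1).factorial : ℝ) := by exact_mod_cast congrArg (Nat.cast (R := ℝ)) key
  rw [hnf, eq_div_iff (by positivity)]
  field_simp
  nlinarith [hkey]

-- B1
lemma shapley_eq_sum (v : Finset ι → ℝ) (i : ι) :
    shapley v i = ∑ S ∈ (Finset.univ.erase i).powerset,
      (Fintype.card ι : ℝ)⁻¹ * ((Fintype.card ι - 1).choose S.card : ℝ)⁻¹
        * (v (insert i S) - v S) := by
  set n := Fintype.card ι with hn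
  have hn1 : 1 ≤ n := Fintype.card_pos_iff.mpr ⟨i⟩
  have hmap : ∀ S ∈ (Finset.univ.erase i).powerset, S.card + 1 ∈ Finset.Icc 1 n := by
    intro S hS
    simp only [mem_powerset] at hS
    have h1 : S.card ≤ n - 1 := by
      have := Finset.card_le_card hS
      rwa [Finset.card_erase_of_mem (mem_univ i), Finset.card_univ] at this
    simp only [Finset.mem_Icc]
    omega
  rw [← Finset.sum_fiberwise_of_maps_to hmap
    (fun S => (n : ℝ)⁻¹ * ((n - 1).choose S.card : ℝ)⁻¹ * (v (insert i S) - v S))]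
  rw [shapley, Finset.mul_sum]
  refine Finset.sum_congr rfl fun k hk => ?_
  simp only [Finset.mem_Icc] at hk
  have hfil : (Finset.univ.erase i).powerset.filter (fun S => S.card = k - 1)
      = (Finset.univ.erase i).powerset.filter (fun S => S.card + 1 = k) := by
    refine Finset.filter_congr fun S _ => ?_
    constructor
    · intro h; omega
    · intro h; omega
  rw [hfil, Finset.mul_sum, Finset.mul_sum]
  refine Finset.sum_congr rfl fun S hS => ?_
  simp only [Finset.mem_filter] at hS
  have : S.card = k - 1 := by omega
  rw [this]
  ring

lemma shapley_dividends (v : Finset ι → ℝ) (i : ι) :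
    shapley v i = ∑ U ∈ univ.filter (fun U : Finset ι => i ∈ U), dvd' v U / U.card := by
  classical
  set n := Fintype.card ι with hn
  have hn1 : 1 ≤ n := Fintype.card_pos_iff.mpr ⟨i⟩
  -- coefficient functions
  set c : ℕ → ℝ := fun s => (n : ℝ)⁻¹ * ((n - 1).choose s : ℝ)⁻¹ with hc
  -- LHS split
  have hP : (Finset.univ.erase i).powerset = univ.filter (fun S : Finset ι => i ∉ S) := by
    ext S
    simp only [mem_powerset, mem_filter, mem_univ, true_and]
    constructor
    · intro h hiS
      exact (Finset.mem_erase.mp (h hiS)).1 rfl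
    · intro h x hx
      exact Finset.mem_erase.mpr ⟨fun he => h (he ▸ hx), mem_univ x⟩
  have lhs_eq : shapley v i
      = ∑ R ∈ univ.filter (fun R : Finset ι => i ∈ R), c (R.card - 1) * v R
        - ∑ S ∈ univ.filter (fun S : Finset ι => i ∉ S), c S.card * v S := by
    rw [shapley_eq_sum]
    have e1 : ∀ S ∈ (Finset.univ.erase i).powerset,
        c S.card * (v (insert i S) - v S) = c S.card * v (insert i S) - c S.card * v S :=
      fun S _ => by ring
    rw [Finset.sum_congr rfl e1, Finset.sum_sub_distrib, hP]
    congr 1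
    refine Finset.sum_nbij' (fun S => insert i S) (fun R => R.erase i) ?_ ?_ ?_ ?_ ?_
    · intro S hS
      simp only [mem_filter, mem_univ, true_and]
      exact Finset.mem_insert_self i S
    · intro R hR
      simp only [mem_filter, mem_univ, true_and] at hR ⊢
      exact Finset.notMem_erase i R
    · intro S hS
      simp only [mem_filter, mem_univ, true_and] at hS
      exact Finset.erase_insert hS
    · intro R hR
      simp only [mem_filter, mem_univ, true_and] at hR
      exact Finset.insert_erase hR
    · intro S hS
      simp only [mem_filter, mem_univ, true_and] at hS
      rw [Finset.card_insert_of_notMem hS]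
      simp
  -- RHS rewriting
  have rhs1 : ∀ U : Finset ι, (if i ∈ U then dvd' v U / U.card else 0)
      = ∑ R ∈ univ, (if insert i R ⊆ U then (-1:ℝ)^U.card * (-1)^R.card * v R / U.card else 0) := by
    intro U
    by_cases hiU : i ∈ U
    · rw [if_pos hiU, dvd', Finset.sum_div]
      have hp : U.powerset = univ.filter (fun R : Finset ι => insert i R ⊆ U) := by
        ext R
        simp only [mem_powerset, mem_filter, mem_univ, true_and, Finset.insert_subset_iff]
        exact ⟨fun h => ⟨hiU, h⟩, fun h => h.2⟩
      rw [hp, Finset.sum_filter]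
    · rw [if_neg hiU]
      symm
      refine Finset.sum_eq_zero fun R _ => ?_
      rw [if_neg]
      intro h
      exact hiU (h (Finset.mem_insert_self i R))
  have rhs2 : ∑ U ∈ univ.filter (fun U : Finset ι => i ∈ U), dvd' v U / U.card
      = ∑ R ∈ univ, ∑ U ∈ univ.filter (fun U : Finset ι => insert i R ⊆ U),
          (-1:ℝ)^U.card * (-1)^R.card * v R / U.card := by
    rw [Finset.sum_filter, Finset.sum_congr rfl (fun U _ => rhs1 U), Finset.sum_comm]
    exact Finset.sum_congr rfl fun R _ => by rw [Finset.sum_filter]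
  -- per-R evaluation
  have hcardle : ∀ R : Finset ι, R.card ≤ n := fun R => by
    simpa using Finset.card_le_card (Finset.subset_univ R)
  have caseIn : ∀ R : Finset ι, i ∈ R →
      ∑ U ∈ univ.filter (fun U : Finset ι => insert i R ⊆ U),
          (-1:ℝ)^U.card * (-1)^R.card * v R / U.card
        = c (R.card - 1) * v R := by
    intro R hiR
    rw [Finset.insert_eq_self.mpr hiR]
    have h1 : ∑ U ∈ univ.filter (fun U : Finset ι => R ⊆ U),
        (-1:ℝ)^U.card * (-1)^R.card * v R / U.card
        = (∑ U ∈ univ.filter (fun U : Finset ι => R ⊆ U),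
            (-1:ℝ)^U.card * (-1)^R.card / U.card) * v R := by
      rw [Finset.sum_mul]
      exact Finset.sum_congr rfl fun U _ => by ring
    rw [h1, supersum R ⟨i, hiR⟩, ← hn]
    have hr1 : 1 ≤ R.card := Finset.card_pos.mpr ⟨i, hiR⟩
    rw [← coeff_eq n R.card hr1 (hcardle R)]
  have caseOut : ∀ R : Finset ι, i ∉ R →
      ∑ U ∈ univ.filter (fun U : Finset ι => insert i R ⊆ U),
          (-1:ℝ)^U.card * (-1)^R.card * v R / U.card
        = - (c R.card * v R) := by
    intro R hiR
    set R' := insert i R with hR'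
    have hcard' : R'.card = R.card + 1 := Finset.card_insert_of_notMem hiR
    have h1 : ∑ U ∈ univ.filter (fun U : Finset ι => R' ⊆ U),
        (-1:ℝ)^U.card * (-1)^R.card * v R / U.card
        = (∑ U ∈ univ.filter (fun U : Finset ι => R' ⊆ U),
            (-1:ℝ)^U.card * (-1)^R'.card / U.card) * (- v R) := by
      rw [Finset.sum_mul]
      refine Finset.sum_congr rfl fun U _ => ?_
      rw [hcard', pow_succ]
      ring
    have h2 : R.card + 1 ≤ n := by
      have hne : R ≠ univ := fun h => hiR (by rw [h]; exact mem_univ i)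
      have := Finset.card_lt_card (Finset.ssubset_univ_iff.mpr hne)
      simp only [Finset.card_univ] at this
      omega
    rw [h1, supersum R' ⟨i, Finset.mem_insert_self i R⟩, ← hn, hcard']
    rw [← coeff_eq n (R.card + 1) (by omega) h2]
    simp only [hc, Nat.add_sub_cancel]
    ring
  -- combine
  rw [lhs_eq, rhs2]
  rw [← Finset.sum_filter_add_sum_filter_not univ (fun R : Finset ι => i ∈ R)]
  rw [Finset.sum_congr rfl (fun R hR => caseIn R (Finset.mem_filter.mp hR).2),
    Finset.sum_congr rfl (fun R hR => caseOut R (Finset.mem_filter.mp hR).2)]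
  rw [Finset.sum_neg_distrib]
  ring

lemma innerSumCom (U S : Finset ι) :
    ∑ T ∈ U.powerset, (-1:ℝ)^U.card * (-1)^T.card * commander T S
      = if U ⊆ S then (-1:ℝ)^(U.card+1) * U.card else 0 := by
  classical
  have h1 : ∑ T ∈ U.powerset, (-1:ℝ)^U.card * (-1)^T.card * commander T S
      = ∑ p ∈ (U ∩ S).powerset ×ˢ (U \ S).powerset,
          ((-1:ℝ)^U.card * ((-1)^p.1.card * commander p.1 S)) * (-1)^p.2.card := by
    refine Finset.sum_nbij' (fun T => (T ∩ S, T \ S)) (fun p => p.1 ∪ p.2) ?_ ?_ ?_ ?_ ?_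
    · intro T hT
      simp only [mem_powerset] at hT
      simp only [Finset.mem_product, mem_powerset]
      exact ⟨Finset.inter_subset_inter hT (le_refl S), Finset.sdiff_subset_sdiff hT (le_refl S)⟩
    · intro p hp
      simp only [Finset.mem_product, mem_powerset] at hp
      simp only [mem_powerset]
      exact Finset.union_subset (hp.1.trans Finset.inter_subset_left)
        (hp.2.trans Finset.sdiff_subset)
    · intro T _
      show (T ∩ S) ∪ (T \ S) = T
      rw [Finset.union_comm]; exact Finset.sdiff_union_inter T S
    · intro p hp
      simp only [Finset.mem_product, mem_powerset] at hp
      have hA : p.1 ⊆ S := hp.1.trans Finset.inter_subset_right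
      have hB : Disjoint p.2 S := Finset.disjoint_left.mpr
        fun x hx hxS => (Finset.mem_sdiff.mp (hp.2 hx)).2 hxS
      have e1 : (p.1 ∪ p.2) ∩ S = p.1 := by
        rw [Finset.union_inter_distrib_right, Finset.inter_eq_left.mpr hA,
          Finset.disjoint_iff_inter_eq_empty.mp hB, Finset.union_empty]
      have e2 : (p.1 ∪ p.2) \ S = p.2 := by
        rw [Finset.union_sdiff_distrib, Finset.sdiff_eq_empty_iff_subset.mpr hA,
          Finset.sdiff_eq_self_of_disjoint hB, Finset.empty_union]
      exact Prod.ext e1 e2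
    · intro T hT
      have hcard : T.card = (T ∩ S).card + (T \ S).card :=
        (Finset.card_inter_add_card_sdiff T S).symm
      have hset : S ∩ (T ∩ S) = S ∩ T := by
        ext x; simp only [Finset.mem_inter]; tauto
      have hcomm : commander (T ∩ S) S = commander T S := by
        rw [commander, commander, hset]
      rw [hcard, pow_add, ← hcomm]
      ring
  rw [h1, Finset.sum_product]
  have h2 : ∀ A ∈ (U ∩ S).powerset,
      ∑ B ∈ (U \ S).powerset,
          ((-1:ℝ)^U.card * ((-1)^A.card * commander A S)) * (-1)^B.card
        = ((-1:ℝ)^U.card * ((-1)^A.card * commander A S))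
            * (if U \ S = ∅ then 1 else 0) := by
    intro A _
    rw [← Finset.mul_sum, sum_pow_neg_one]
  rw [Finset.sum_congr rfl h2, ← Finset.sum_mul]
  have h3 : ∀ A ∈ (U ∩ S).powerset,
      (-1:ℝ)^U.card * ((-1)^A.card * commander A S)
        = (-1:ℝ)^U.card * (if A.card = 1 then (-1:ℝ) else 0) := by
    intro A hA
    simp only [mem_powerset] at hA
    have hAS : S ∩ A = A := Finset.inter_eq_right.mpr (hA.trans Finset.inter_subset_right)
    rw [commander, hAS]
    by_cases h : A.card = 1 <;> simp [h]
  rw [Finset.sum_congr rfl h3, ← Finset.mul_sum]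
  have h4 : ∑ A ∈ (U ∩ S).powerset, (if A.card = 1 then (-1:ℝ) else 0)
      = -((U ∩ S).card : ℝ) := by
    rw [← Finset.sum_filter, ← Finset.powersetCard_eq_filter, Finset.sum_const,
      Finset.card_powersetCard, Nat.choose_one_right]
    simp
  rw [h4]
  by_cases hUS : U ⊆ S
  · rw [if_pos hUS, if_pos (Finset.sdiff_eq_empty_iff_subset.mpr hUS),
      Finset.inter_eq_left.mpr hUS, pow_succ]
    ring
  · rw [if_neg hUS, if_neg (fun h => hUS (Finset.sdiff_eq_empty_iff_subset.mp h))]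
    ring

noncomputable def alph {ι : Type*} [Fintype ι] [DecidableEq ι]
    (v : Finset ι → ℝ) (T : Finset ι) : ℝ :=
  ∑ U ∈ univ.filter (fun U : Finset ι => T ⊆ U),
    (-1:ℝ)^U.card * (-1)^T.card * ((-1:ℝ)^(U.card - 1) * dvd' v U / U.card)

lemma decomp (v : Finset ι → ℝ) (hv : v ∅ = 0) (S : Finset ι) :
    ∑ T ∈ univ.filter (fun T : Finset ι => T.Nonempty), alph v T * commander T S = v S := by
  classical
  have step1 : ∑ T ∈ univ.filter (fun T : Finset ι => T.Nonempty), alph v T * commander T S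
      = ∑ T ∈ univ, ∑ U ∈ univ, (if T.Nonempty ∧ T ⊆ U then
          (-1:ℝ)^U.card * (-1)^T.card * ((-1:ℝ)^(U.card - 1) * dvd' v U / U.card)
            * commander T S else 0) := by
    rw [Finset.sum_filter]
    refine Finset.sum_congr rfl fun T _ => ?_
    by_cases hT : T.Nonempty
    · rw [if_pos hT, alph, Finset.sum_mul, Finset.sum_filter]
      refine Finset.sum_congr rfl fun U _ => ?_
      by_cases h : T ⊆ U <;> simp [h, hT]
    · rw [if_neg hT]
      symm
      refine Finset.sum_eq_zero fun U _ => ?_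
      rw [if_neg (fun h => hT h.1)]
  have step2 : ∀ U : Finset ι,
      ∑ T ∈ univ, (if T.Nonempty ∧ T ⊆ U then
          (-1:ℝ)^U.card * (-1)^T.card * ((-1:ℝ)^(U.card - 1) * dvd' v U / U.card)
            * commander T S else 0)
      = ((-1:ℝ)^(U.card - 1) * dvd' v U / U.card)
          * ∑ T ∈ U.powerset, (-1:ℝ)^U.card * (-1)^T.card * commander T S := by
    intro U
    rw [Finset.mul_sum]
    have hp : U.powerset = univ.filter (fun T : Finset ι => T ⊆ U) := by
      ext T; simp [mem_powerset]
    rw [hp, Finset.sum_filter]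
    refine Finset.sum_congr rfl fun T _ => ?_
    by_cases h : T ⊆ U
    · rw [if_pos h]
      by_cases hT : T.Nonempty
      · rw [if_pos ⟨hT, h⟩]; ring
      · rw [if_neg (fun hc => hT hc.1)]
        have : T = ∅ := Finset.not_nonempty_iff_eq_empty.mp hT
        subst this
        have : commander (∅ : Finset ι) S = 0 := by
          rw [commander]; simp
        rw [this]; ring
    · rw [if_neg (fun hc => h hc.2), if_neg h]
  have step3 : ∀ U : Finset ι,
      ((-1:ℝ)^(U.card - 1) * dvd' v U / U.card)
          * ∑ T ∈ U.powerset, (-1:ℝ)^U.card * (-1)^T.card * commander T S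
        = if U ⊆ S then dvd' v U else 0 := by
    intro U
    rw [innerSumCom]
    by_cases hUS : U ⊆ S
    · rw [if_pos hUS, if_pos hUS]
      rcases Finset.eq_empty_or_nonempty U with rfl | hU
      · simp [dvd', hv]
      · have hc : 1 ≤ U.card := Finset.card_pos.mpr hU
        have hc0 : (U.card : ℝ) ≠ 0 := by
          have : (0:ℝ) < U.card := by exact_mod_cast hc
          exact this.ne'
        have hsign : (-1:ℝ)^(U.card - 1) * (-1:ℝ)^(U.card + 1) = 1 := by
          have : U.card - 1 + (U.card + 1) = U.card + U.card := by omega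
          rw [← pow_add, this, pow_add, neg_one_sq_pow]
        field_simp
        calc (-1:ℝ)^(U.card - 1) * dvd' v U * (-1:ℝ)^(U.card + 1)
            = ((-1:ℝ)^(U.card - 1) * (-1:ℝ)^(U.card + 1)) * dvd' v U := by ring
          _ = dvd' v U := by rw [hsign]; ring
    · rw [if_neg hUS, if_neg hUS, mul_zero]
  rw [step1, Finset.sum_comm]
  rw [Finset.sum_congr rfl (fun U _ => (step2 U).trans (step3 U))]
  rw [← Finset.sum_filter]
  have : univ.filter (fun U : Finset ι => U ⊆ S) = S.powerset := by
    ext U; simp [mem_powerset]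
  rw [this, sum_dvd']

lemma alph_singleton (v : Finset ι → ℝ) (i : ι) :
    alph v {i} = shapley v i := by
  rw [shapley_dividends, alph]
  have : univ.filter (fun U : Finset ι => {i} ⊆ U) = univ.filter (fun U : Finset ι => i ∈ U) := by
    ext U; simp [Finset.singleton_subset_iff]
  rw [this]
  refine Finset.sum_congr rfl fun U hU => ?_
  simp only [mem_filter, mem_univ, true_and] at hU
  have hc : 1 ≤ U.card := Finset.card_pos.mpr ⟨i, hU⟩
  have hsign : (-1:ℝ)^U.card * (-1:ℝ)^(U.card - 1) * (-1:ℝ)^({i} : Finset ι).card = 1 := by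
    rw [Finset.card_singleton, pow_one, ← pow_add]
    have : U.card + (U.card - 1) = (U.card - 1) + (U.card - 1) + 1 := by omega
    rw [this, pow_add, pow_add, neg_one_sq_pow, pow_one]
    ring
  calc (-1:ℝ)^U.card * (-1:ℝ)^({i} : Finset ι).card
        * ((-1:ℝ)^(U.card - 1) * dvd' v U / U.card)
      = ((-1:ℝ)^U.card * (-1:ℝ)^(U.card - 1) * (-1:ℝ)^({i} : Finset ι).card)
          * (dvd' v U / U.card) := by ring
    _ = dvd' v U / U.card := by rw [hsign]; ring

end Aux

/-- Every utility function `v` with Shapley vector `s = φ(v)` decomposes as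
`v(S) = Σ_{i∈S} s_i + Σ_{|T| ≥ 2} α_T ū_T(S)` for suitable coefficients `α_T`. -/

theorem stmt_4 {ι : Type*} [Fintype ι] [DecidableEq ι]
    (hn : 1 ≤ Fintype.card ι) (v : Finset ι → ℝ) (hv : v ∅ = 0) :
    ∃ α : Finset ι → ℝ, ∀ S : Finset ι,
      v S = (∑ i ∈ S, shapley v i) +
        ∑ T ∈ Finset.univ.filter (fun T : Finset ι => 2 ≤ T.card),
          α T * commander T S := by
  classical
  refine ⟨alph v, fun S => ?_⟩
  rw [← decomp v hv S]
  have hsplit : ∑ T ∈ univ.filter (fun T : Finset ι => T.Nonempty), alph v T * commander T S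
      = ∑ T ∈ univ.filter (fun T : Finset ι => T.card = 1), alph v T * commander T S
        + ∑ T ∈ univ.filter (fun T : Finset ι => 2 ≤ T.card), alph v T * commander T S := by
    rw [← Finset.sum_filter_add_sum_filter_not (univ.filter (fun T : Finset ι => T.Nonempty))
      (fun T => T.card = 1)]
    congr 1
    · congr 1
      rw [Finset.filter_filter]
      refine Finset.filter_congr fun T _ => ?_
      simp only [Finset.nonempty_iff_ne_empty, Ne, ← Finset.card_eq_zero]
      omega
    · congr 1
      rw [Finset.filter_filter]
      refine Finset.filter_congr fun T _ => ?_
      simp only [Finset.nonempty_iff_ne_empty, Ne, ← Finset.card_eq_zero]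
      omega
  rw [hsplit]
  congr 1
  have hbij : ∑ T ∈ univ.filter (fun T : Finset ι => T.card = 1), alph v T * commander T S
      = ∑ i ∈ univ, alph v {i} * commander {i} S := by
    have himg : (univ : Finset ι).image (fun i => ({i} : Finset ι))
        = univ.filter (fun T : Finset ι => T.card = 1) := by
      ext T
      simp only [Finset.mem_image, mem_univ, true_and, mem_filter, Finset.card_eq_one]
      constructor
      · rintro ⟨a, rfl⟩; exact ⟨a, rfl⟩
      · rintro ⟨a, rfl⟩; exact ⟨a, rfl⟩
    rw [← himg, Finset.sum_image (fun a _ b _ h => Finset.singleton_injective h)]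
  rw [hbij]
  have hterm : ∀ i : ι, alph v {i} * commander {i} S
      = if i ∈ S then shapley v i else 0 := by
    intro i
    rw [alph_singleton]
    by_cases h : i ∈ S
    · have : S ∩ {i} = {i} := by
        rw [Finset.inter_singleton_of_mem h]
      rw [if_pos h, commander, this]
      simp
    · have : S ∩ {i} = ∅ := Finset.inter_singleton_of_notMem h
      rw [if_neg h, commander, this]
      simp
  rw [Finset.sum_congr rfl (fun i _ => hterm i), Finset.sum_ite_mem]
  simp
end

section
/- Let N be a finite set with |N| ≥ 3 and let S₁, S₂ ⊆ N satisfy S₁ ≠ S₂, S₁ ≠ ∅, S₂ ≠ ∅, S₁ ≠ N, and S₂ ≠ N. Then there exists a subset T ⊆ N with |T| ≥ 2 such that exactly one of the two conditions |T ∩ S₁| = 1 and |T ∩ S₂| = 1 holds. -/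
open Finset

/-- For distinct proper nonempty subsets `S₁, S₂` of a finite set `N` with `|N| ≥ 3`,
there exists `T ⊆ N` with `|T| ≥ 2` such that exactly one of `|T ∩ S₁| = 1` and
`|T ∩ S₂| = 1` holds. -/
theorem stmt_5 {ι : Type*} [Fintype ι] [DecidableEq ι]
    (hn : 3 ≤ Fintype.card ι) (S₁ S₂ : Finset ι)
    (h12 : S₁ ≠ S₂) (h1 : S₁ ≠ ∅) (h2 : S₂ ≠ ∅)
    (h1N : S₁ ≠ Finset.univ) (h2N : S₂ ≠ Finset.univ) :
    ∃ T : Finset ι, 2 ≤ T.card ∧ Xor' ((T ∩ S₁).card = 1) ((T ∩ S₂).card = 1) := by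
  have hdiff : ∃ x, (x ∈ S₁ ∧ x ∉ S₂) ∨ (x ∈ S₂ ∧ x ∉ S₁) := by
    by_contra h
    push_neg at h
    apply h12
    ext a
    have := h a
    tauto
  by_cases hint : (S₁ ∩ S₂).Nonempty
  · obtain ⟨z, hz⟩ := hint
    have hz1 : z ∈ S₁ := (Finset.mem_inter.mp hz).1
    have hz2 : z ∈ S₂ := (Finset.mem_inter.mp hz).2
    obtain ⟨x, hx | hx⟩ := hdiff
    · -- x ∈ S₁ \ S₂ ; T = {x, z} : |T∩S₁| = 2, |T∩S₂| = 1
      have hxz : x ≠ z := fun h => hx.2 (h ▸ hz2)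
      refine ⟨{x, z}, ?_, ?_⟩
      · rw [Finset.card_pair hxz]
      · right
        constructor
        · rw [Finset.insert_inter_of_notMem hx.2, Finset.singleton_inter_of_mem hz2,
            Finset.card_singleton]
        · rw [Finset.insert_inter_of_mem hx.1, Finset.singleton_inter_of_mem hz1,
            Finset.card_pair hxz]
          omega
    · -- x ∈ S₂ \ S₁
      have hxz : x ≠ z := fun h => hx.2 (h ▸ hz1)
      refine ⟨{x, z}, ?_, ?_⟩
      · rw [Finset.card_pair hxz]
      · left
        constructor
        · rw [Finset.insert_inter_of_notMem hx.2, Finset.singleton_inter_of_mem hz1,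
            Finset.card_singleton]
        · rw [Finset.insert_inter_of_mem hx.1, Finset.singleton_inter_of_mem hz2,
            Finset.card_pair hxz]
          omega
  · -- S₁ ∩ S₂ = ∅
    have hdisj : ∀ a, a ∈ S₁ → a ∉ S₂ := by
      intro a ha ha2
      exact hint ⟨a, Finset.mem_inter.mpr ⟨ha, ha2⟩⟩
    by_cases hout : ∃ w, w ∉ S₁ ∧ w ∉ S₂
    · obtain ⟨w, hw1, hw2⟩ := hout
      obtain ⟨x, hx⟩ := Finset.nonempty_of_ne_empty h1
      have hxw : x ≠ w := fun h => hw1 (h ▸ hx)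
      refine ⟨{x, w}, ?_, ?_⟩
      · rw [Finset.card_pair hxw]
      · left
        constructor
        · rw [Finset.insert_inter_of_mem hx, Finset.singleton_inter_of_notMem hw1]
          simp
        · rw [Finset.insert_inter_of_notMem (hdisj x hx),
            Finset.singleton_inter_of_notMem hw2, Finset.card_empty]
          omega
    · -- S₁ ∪ S₂ = univ, disjoint, so card S₁ + card S₂ ≥ 3
      push_neg at hout
      have hcard : S₁.card + S₂.card = Fintype.card ι := by
        have hunion : S₁ ∪ S₂ = Finset.univ := by
          ext a
          simp only [Finset.mem_union, Finset.mem_univ, iff_true]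
          by_contra h
          push_neg at h
          exact h.2 (hout a h.1)
        have := Finset.card_union_add_card_inter S₁ S₂
        rw [hunion, Finset.not_nonempty_iff_eq_empty.mp hint] at this
        simp only [Finset.card_univ, Finset.card_empty, add_zero] at this
        omega
      by_cases hc1 : 2 ≤ S₁.card
      · obtain ⟨a, ha, b, hb, hab⟩ := Finset.one_lt_card.mp hc1
        obtain ⟨y, hy⟩ := Finset.nonempty_of_ne_empty h2
        have hya : y ≠ a := fun h => hdisj a ha (h ▸ hy)
        have hyb : y ≠ b := fun h => hdisj b hb (h ▸ hy)
        refine ⟨{a, b, y}, ?_, ?_⟩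
        · have : ({a, b, y} : Finset ι).card = 3 := by
            rw [Finset.card_insert_of_notMem (by simp [hab, Ne.symm hya]),
              Finset.card_pair (Ne.symm hyb)]
          omega
        · right
          constructor
          · rw [Finset.insert_inter_of_notMem (hdisj a ha),
              Finset.insert_inter_of_notMem (hdisj b hb),
              Finset.singleton_inter_of_mem hy, Finset.card_singleton]
          · rw [Finset.insert_inter_of_mem ha, Finset.insert_inter_of_mem hb,
              Finset.singleton_inter_of_notMem (fun h => hdisj y h hy)]
            rw [show insert b (∅ : Finset ι) = {b} from rfl, Finset.card_pair hab]
            omega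
      · have hc2 : 2 ≤ S₂.card := by omega
        obtain ⟨a, ha, b, hb, hab⟩ := Finset.one_lt_card.mp hc2
        obtain ⟨y, hy⟩ := Finset.nonempty_of_ne_empty h1
        have hya : y ≠ a := fun h => hdisj y hy (h ▸ ha)
        have hyb : y ≠ b := fun h => hdisj y hy (h ▸ hb)
        refine ⟨{a, b, y}, ?_, ?_⟩
        · have : ({a, b, y} : Finset ι).card = 3 := by
            rw [Finset.card_insert_of_notMem (by simp [hab, Ne.symm hya]),
              Finset.card_pair (Ne.symm hyb)]
          omega
        · left
          constructor
          · rw [Finset.insert_inter_of_notMem (fun h => hdisj a h ha),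
              Finset.insert_inter_of_notMem (fun h => hdisj b h hb),
              Finset.singleton_inter_of_mem hy, Finset.card_singleton]
          · rw [Finset.insert_inter_of_mem ha, Finset.insert_inter_of_mem hb,
              Finset.singleton_inter_of_notMem (hdisj y hy)]
            rw [show insert b (∅ : Finset ι) = {b} from rfl, Finset.card_pair hab]
            omega
end

section
/- Let N be a finite set with |N| = n ≥ 2, let v be a utility function on N, and let i, j ∈ N be distinct points such that v(S ∪ {i}) ≤ v(S ∪ {j}) for every subset S ⊆ N∖{i, j}. Then φ_i(v) ≤ φ_j(v). -/
open Finset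

/-- If `v(S ∪ {i}) ≤ v(S ∪ {j})` for every `S ⊆ N ∖ {i, j}`, then `φ_i(v) ≤ φ_j(v)`. -/
theorem stmt_6 {ι : Type*} [Fintype ι] [DecidableEq ι]
    (hn : 2 ≤ Fintype.card ι) (v : Finset ι → ℝ) (hv : v ∅ = 0)
    (i j : ι) (hij : i ≠ j)
    (h : ∀ S : Finset ι, S ⊆ Finset.univ \ {i, j} → v (insert i S) ≤ v (insert j S)) :
    shapley v i ≤ shapley v j := by
  classical
  have hsub : ∀ S : Finset ι, i ∉ S → j ∉ S → S ⊆ Finset.univ \ {i, j} := by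
    intro S hi hj x hx
    simp only [Finset.mem_sdiff, Finset.mem_univ, Finset.mem_insert, Finset.mem_singleton,
      true_and]
    push_neg
    exact ⟨fun h' => hi (h' ▸ hx), fun h' => hj (h' ▸ hx)⟩
  set m : Finset ι → Finset ι := fun S => S.map (Equiv.swap i j).toEmbedding with hm
  have hmem : ∀ (S : Finset ι) (a : ι), a ∈ m S ↔ Equiv.swap i j a ∈ S := by
    intro S a
    rw [hm]
    rw [Finset.mem_map_equiv, Equiv.symm_swap]
  have hmm : ∀ S : Finset ι, m (m S) = S := by
    intro S; ext a; rw [hmem, hmem, Equiv.swap_apply_self]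
  have key : ∀ k : ℕ,
      (∑ S ∈ (Finset.univ.erase i).powerset.filter (fun S => S.card = k),
        (v (insert i S) - v S)) ≤
      ∑ S ∈ (Finset.univ.erase j).powerset.filter (fun S => S.card = k),
        (v (insert j S) - v S) := by
    intro k
    have hmapmem : ∀ S ∈ (Finset.univ.erase i).powerset.filter (fun S => S.card = k),
        m S ∈ (Finset.univ.erase j).powerset.filter (fun S => S.card = k) := by
      intro S hS
      simp only [Finset.mem_filter, Finset.mem_powerset] at hS ⊢
      obtain ⟨hS1, hS2⟩ := hS
      constructor
      · intro a ha
        rw [hmem] at ha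
        have := hS1 ha
        rw [Finset.mem_erase] at this ⊢
        refine ⟨fun haj => ?_, Finset.mem_univ a⟩
        subst haj
        rw [Equiv.swap_apply_right] at this
        exact this.1 rfl
      · rw [hm]; simpa using hS2
    have heq : ∑ S ∈ (Finset.univ.erase i).powerset.filter (fun S => S.card = k),
        (v (insert j (m S)) - v (m S)) =
        ∑ S ∈ (Finset.univ.erase j).powerset.filter (fun S => S.card = k),
        (v (insert j S) - v S) := by
      refine Finset.sum_nbij' m m hmapmem ?_ ?_ ?_ ?_
      · intro S hS
        simp only [Finset.mem_filter, Finset.mem_powerset] at hS ⊢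
        obtain ⟨hS1, hS2⟩ := hS
        constructor
        · intro a ha
          rw [hmem] at ha
          have := hS1 ha
          rw [Finset.mem_erase] at this ⊢
          refine ⟨fun hai => ?_, Finset.mem_univ a⟩
          subst hai
          rw [Equiv.swap_apply_left] at this
          exact this.1 rfl
        · rw [hm]; simpa using hS2
      · intro S _; exact hmm S
      · intro S _; exact hmm S
      · intro S _; rfl
    rw [← heq]
    apply Finset.sum_le_sum
    intro S hS
    simp only [Finset.mem_filter, Finset.mem_powerset] at hS
    have hiS : i ∉ S := fun hi => (Finset.mem_erase.mp (hS.1 hi)).1 rfl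
    by_cases hjS : j ∈ S
    · -- S = insert j T, m S = insert i T, T = S.erase j
      set T := S.erase j with hT
      have hiT : i ∉ T := fun h' => hiS (Finset.mem_erase.mp h').2
      have hjT : j ∉ T := Finset.notMem_erase _ _
      have hmS : m S = insert i T := by
        ext a
        rw [hmem, Finset.mem_insert, hT, Finset.mem_erase]
        rcases eq_or_ne a i with rfl | hai
        · simp [Equiv.swap_apply_left, hjS]
        · rcases eq_or_ne a j with rfl | haj
          · simp [Equiv.swap_apply_right, hij.symm, hiS]
          · rw [Equiv.swap_apply_of_ne_of_ne hai haj]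
            simp [hai, haj]
      have hSins : S = insert j T := (Finset.insert_erase hjS).symm
      have h1 : insert i S = insert j (insert i T) := by
        rw [hSins, Finset.insert_comm]
      rw [hmS, h1, hSins]
      linarith [h T (hsub T hiT hjT)]
    · have hmS : m S = S := by
        ext a
        rw [hmem]
        rcases eq_or_ne a i with rfl | hai
        · simp [Equiv.swap_apply_left, hjS, hiS]
        · rcases eq_or_ne a j with rfl | haj
          · simp [Equiv.swap_apply_right, hiS, hjS]
          · rw [Equiv.swap_apply_of_ne_of_ne hai haj]
      rw [hmS]
      have := h S (hsub S hiS hjS)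
      linarith
  unfold shapley
  gcongr with k hk
  exact key (k - 1)
end

section
/- Let N be a finite set with |N| = n, partitioned as N = S_bad ∪ S_clean with S_bad ∩ S_clean = ∅ and |S_clean| = k. Let v be a utility function on N such that for every j ∈ S_clean, every i ∈ S_bad, and every S ⊆ N∖{i, j}, one has v(S ∪ {i}) ≤ v(S ∪ {j}). Then: (a) φ_j(v) ≥ φ_i(v) for every j ∈ S_clean and i ∈ S_bad (so S_clean consists of points with the top-k Shapley values); and (b) v(S_clean) ≥ v(S) for every S ⊆ N with |S| = k (so S_clean attains the maximum utility among all size-k subsets). -/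
open Finset

/-- Key per-cardinality sum comparison for the Shapley inequality. -/
lemma shapley_sum_le {ι : Type*} [Fintype ι] [DecidableEq ι]
    (v : Finset ι → ℝ) (i j : ι) (hij : i ≠ j)
    (hdom : ∀ S : Finset ι, S ⊆ Finset.univ \ {i, j} → v (insert i S) ≤ v (insert j S))
    (m : ℕ) :
    ∑ S ∈ (Finset.univ.erase i).powerset.filter (fun S => S.card = m),
        (v (insert i S) - v S) ≤
    ∑ S ∈ (Finset.univ.erase j).powerset.filter (fun S => S.card = m),
        (v (insert j S) - v S) := by
  set A := (Finset.univ.erase i).powerset.filter (fun S => S.card = m) with hA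
  set B := (Finset.univ.erase j).powerset.filter (fun S => S.card = m) with hB
  have memA : ∀ S : Finset ι, S ∈ A ↔ (i ∉ S ∧ S.card = m) := by
    intro S
    simp only [hA, mem_filter, mem_powerset, subset_erase, subset_univ, true_and]
  have memB : ∀ S : Finset ι, S ∈ B ↔ (j ∉ S ∧ S.card = m) := by
    intro S
    simp only [hB, mem_filter, mem_powerset, subset_erase, subset_univ, true_and]
  set σ : Finset ι → Finset ι := fun S => if j ∈ S then insert i (S.erase j) else S with hσ
  set τ : Finset ι → Finset ι := fun S => if i ∈ S then insert j (S.erase i) else S with hτ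
  have step1 : ∑ S ∈ A, (v (insert i S) - v S) ≤
      ∑ S ∈ A, (v (insert j (σ S)) - v (σ S)) := by
    apply Finset.sum_le_sum
    intro S hS
    obtain ⟨hiS, hcard⟩ := (memA S).1 hS
    by_cases hjS : j ∈ S
    · have hσS : σ S = insert i (S.erase j) := by simp [hσ, hjS]
      have hsub : S.erase j ⊆ Finset.univ \ {i, j} := by
        intro x hx
        simp only [mem_sdiff, mem_univ, true_and, mem_insert, mem_singleton]
        rcases Finset.mem_erase.1 hx with ⟨hxj, hxS⟩
        exact fun h => h.elim (fun h' => hiS (h' ▸ hxS)) hxj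
      have h1 : insert j (σ S) = insert i S := by
        rw [hσS, Finset.insert_comm, Finset.insert_erase hjS]
      have h2 : v (σ S) ≤ v S := by
        rw [hσS]
        calc v (insert i (S.erase j)) ≤ v (insert j (S.erase j)) := hdom _ hsub
          _ = v S := by rw [Finset.insert_erase hjS]
      rw [h1]
      linarith
    · have hσS : σ S = S := by simp [hσ, hjS]
      rw [hσS]
      have hsub : S ⊆ Finset.univ \ {i, j} := by
        intro x hx
        simp only [mem_sdiff, mem_univ, true_and, mem_insert, mem_singleton]
        exact fun h => h.elim (fun h' => hiS (h' ▸ hx)) (fun h' => hjS (h' ▸ hx))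
      have := hdom S hsub
      linarith
  have step2 : ∑ S ∈ A, (v (insert j (σ S)) - v (σ S)) =
      ∑ S ∈ B, (v (insert j S) - v S) := by
    apply Finset.sum_nbij' σ τ
    · intro S hS
      obtain ⟨hiS, hcard⟩ := (memA S).1 hS
      rw [memB]
      by_cases hjS : j ∈ S
      · have hσS : σ S = insert i (S.erase j) := by simp [hσ, hjS]
        constructor
        · rw [hσS]
          intro h
          rcases Finset.mem_insert.1 h with h | h
          · exact hij h.symm
          · exact (Finset.mem_erase.1 h).1 rfl
        · have hpos : 0 < S.card := Finset.card_pos.2 ⟨j, hjS⟩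
          rw [hσS, Finset.card_insert_of_notMem (fun h => hiS (Finset.mem_of_mem_erase h)),
            Finset.card_erase_of_mem hjS]
          omega
      · simp [hσ, hjS, hcard]
    · intro S hS
      obtain ⟨hjS, hcard⟩ := (memB S).1 hS
      rw [memA]
      by_cases hiS : i ∈ S
      · have hτS : τ S = insert j (S.erase i) := by simp [hτ, hiS]
        constructor
        · rw [hτS]
          intro h
          rcases Finset.mem_insert.1 h with h | h
          · exact hij h
          · exact (Finset.mem_erase.1 h).1 rfl
        · have hpos : 0 < S.card := Finset.card_pos.2 ⟨i, hiS⟩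
          rw [hτS, Finset.card_insert_of_notMem (fun h => hjS (Finset.mem_of_mem_erase h)),
            Finset.card_erase_of_mem hiS]
          omega
      · simp [hτ, hiS, hcard]
    · intro S hS
      obtain ⟨hiS, _⟩ := (memA S).1 hS
      by_cases hjS : j ∈ S
      · have hσS : σ S = insert i (S.erase j) := by simp [hσ, hjS]
        have hiσ : i ∈ σ S := by rw [hσS]; exact Finset.mem_insert_self _ _
        rw [hσS] at hiσ ⊢
        simp only [hτ, if_pos hiσ]
        rw [Finset.erase_insert (fun h => hiS (Finset.mem_of_mem_erase h)),
          Finset.insert_erase hjS]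
      · have hσS : σ S = S := by simp [hσ, hjS]
        rw [hσS]
        simp [hτ, hiS]
    · intro S hS
      obtain ⟨hjS, _⟩ := (memB S).1 hS
      by_cases hiS : i ∈ S
      · have hτS : τ S = insert j (S.erase i) := by simp [hτ, hiS]
        have hjτ : j ∈ τ S := by rw [hτS]; exact Finset.mem_insert_self _ _
        rw [hτS] at hjτ ⊢
        simp only [hσ, if_pos hjτ]
        rw [Finset.erase_insert (fun h => hjS (Finset.mem_of_mem_erase h)),
          Finset.insert_erase hiS]
      · have hτS : τ S = S := by simp [hτ, hiS]
        rw [hτS]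
        simp [hσ, hjS]
    · intro S _
      rfl
  linarith

/-- Exchange lemma for part (b). -/
lemma exchange_le {ι : Type*} [Fintype ι] [DecidableEq ι]
    (Sbad Sclean : Finset ι)
    (hunion : Sbad ∪ Sclean = Finset.univ) (hdisj : Sbad ∩ Sclean = ∅)
    (v : Finset ι → ℝ)
    (hcond : ∀ j ∈ Sclean, ∀ i ∈ Sbad, ∀ S : Finset ι,
      S ⊆ Finset.univ \ {i, j} → v (insert i S) ≤ v (insert j S)) :
    ∀ n : ℕ, ∀ S : Finset ι, (Sclean \ S).card = n → S.card = Sclean.card →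
      v S ≤ v Sclean := by
  intro n
  induction n with
  | zero =>
    intro S h0 hcard
    have hsub : Sclean ⊆ S := by
      rw [← Finset.sdiff_eq_empty_iff_subset]
      exact Finset.card_eq_zero.1 h0
    have : S = Sclean := (Finset.eq_of_subset_of_card_le hsub (le_of_eq hcard)).symm
    rw [this]
  | succ m ih =>
    intro S hm hcard
    have hne : (Sclean \ S).Nonempty := by
      rw [← Finset.card_pos, hm]; omega
    obtain ⟨j, hj⟩ := hne
    rw [Finset.mem_sdiff] at hj
    obtain ⟨hjclean, hjS⟩ := hj
    have hne2 : (S \ Sclean).Nonempty := by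
      by_contra h
      rw [Finset.not_nonempty_iff_eq_empty, Finset.sdiff_eq_empty_iff_subset] at h
      have := Finset.eq_of_subset_of_card_le h (le_of_eq hcard.symm)
      rw [this] at hjS
      exact hjS hjclean
    obtain ⟨i, hi⟩ := hne2
    rw [Finset.mem_sdiff] at hi
    obtain ⟨hiS, hiclean⟩ := hi
    have hibad : i ∈ Sbad := by
      have : i ∈ Sbad ∪ Sclean := by rw [hunion]; exact Finset.mem_univ i
      rcases Finset.mem_union.1 this with h | h
      · exact h
      · exact absurd h hiclean
    have hij : i ≠ j := fun h => hiclean (h ▸ hjclean)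
    set S' := insert j (S.erase i) with hS'
    have hjerase : j ∉ S.erase i := fun h => hjS (Finset.mem_of_mem_erase h)
    have hsub : S.erase i ⊆ Finset.univ \ {i, j} := by
      intro x hx
      simp only [mem_sdiff, mem_univ, true_and, mem_insert, mem_singleton]
      rcases Finset.mem_erase.1 hx with ⟨hxi, hxS⟩
      exact fun h => h.elim hxi (fun h' => hjS (h' ▸ hxS))
    have hstep : v S ≤ v S' := by
      calc v S = v (insert i (S.erase i)) := by rw [Finset.insert_erase hiS]
        _ ≤ v (insert j (S.erase i)) := hcond j hjclean i hibad _ hsub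
        _ = v S' := rfl
    have hcard' : S'.card = Sclean.card := by
      rw [hS', Finset.card_insert_of_notMem hjerase, Finset.card_erase_of_mem hiS]
      have : 0 < S.card := Finset.card_pos.2 ⟨i, hiS⟩
      omega
    have hdiff : (Sclean \ S').card = m := by
      have h1 : Sclean \ S' = (Sclean \ S).erase j := by
        ext x
        simp only [hS', Finset.mem_sdiff, Finset.mem_insert, Finset.mem_erase, not_or]
        constructor
        · rintro ⟨hx1, hxj, hxe⟩
          exact ⟨hxj, hx1, fun hxS => hxe ⟨fun h => hiclean (h ▸ hx1), hxS⟩⟩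
        · rintro ⟨hxj, hx1, hx2⟩
          exact ⟨hx1, hxj, fun h => hx2 h.2⟩
      rw [h1, Finset.card_erase_of_mem (Finset.mem_sdiff.2 ⟨hjclean, hjS⟩), hm]
      omega
    exact le_trans hstep (ih S' hdiff hcard')

/-- If `N = S_bad ∪ S_clean` is a disjoint partition with `|S_clean| = k`, and every clean
point dominates every bad point (`v(S ∪ {i}) ≤ v(S ∪ {j})` for all `S ⊆ N ∖ {i,j}`,
`i ∈ S_bad`, `j ∈ S_clean`), then (a) clean points have the top-`k` Shapley values and
(b) `S_clean` attains the maximum utility among all size-`k` subsets. -/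
theorem stmt_7 {ι : Type*} [Fintype ι] [DecidableEq ι]
    (Sbad Sclean : Finset ι)
    (hunion : Sbad ∪ Sclean = Finset.univ) (hdisj : Sbad ∩ Sclean = ∅)
    (k : ℕ) (hk : Sclean.card = k)
    (v : Finset ι → ℝ) (hv : v ∅ = 0)
    (hcond : ∀ j ∈ Sclean, ∀ i ∈ Sbad, ∀ S : Finset ι,
      S ⊆ Finset.univ \ {i, j} → v (insert i S) ≤ v (insert j S)) :
    (∀ j ∈ Sclean, ∀ i ∈ Sbad, shapley v i ≤ shapley v j) ∧
      (∀ S : Finset ι, S.card = k → v S ≤ v Sclean) := by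
  constructor
  · intro j hj i hi
    have hij : i ≠ j := by
      intro h
      subst h
      have : i ∈ Sbad ∩ Sclean := Finset.mem_inter.2 ⟨hi, hj⟩
      rw [hdisj] at this
      exact Finset.notMem_empty i this
    unfold shapley
    apply mul_le_mul_of_nonneg_left _ (by positivity)
    apply Finset.sum_le_sum
    intro m _
    apply mul_le_mul_of_nonneg_left _ (by positivity)
    exact shapley_sum_le v i j hij (fun S hS => hcond j hj i hi S hS) (m - 1)
  · intro S hS
    exact exchange_le Sbad Sclean hunion hdisj v hcond (Sclean \ S).card S rfl
      (by rw [hS, hk])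
end

section
/- Let N be a finite set with |N| = n ≥ 2 and let v be a monotonically transformed modular utility function on N, i.e., v(S) = f(w₀ + Σ_{i∈S} w_i) for a monotonically non-decreasing f : ℝ → ℝ, a constant w₀ ∈ ℝ, and weights (w_i)_{i∈N}. Then for any i, j ∈ N with w_i ≥ w_j, one has φ_i(v) ≥ φ_j(v). -/
open Finset

lemma swap_double {ι : Type*} [DecidableEq ι] (i j : ι) (U : Finset ι) :
    (U.image (Equiv.swap i j)).image (Equiv.swap i j) = U := by
  rw [Finset.image_image]
  ext x
  simp [Equiv.swap_apply_self]

lemma swap_key {ι : Type*} [Fintype ι] [DecidableEq ι]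
    (f : ℝ → ℝ) (hf : Monotone f) (w₀ : ℝ) (w : ι → ℝ)
    (v : Finset ι → ℝ)
    (hv : ∀ S : Finset ι, v S = f (w₀ + ∑ i ∈ S, w i))
    (i j : ι) (hw : w j ≤ w i) (T : Finset ι) (hT : i ∉ T) :
    v ((insert i T).image (Equiv.swap i j)) - v (T.image (Equiv.swap i j))
      ≤ v (insert i T) - v T := by
  have hinj : Function.Injective (Equiv.swap i j) := (Equiv.swap i j).injective
  by_cases hjT : j ∈ T
  · have hsumT : ∑ x ∈ T, w (Equiv.swap i j x) = (∑ x ∈ T.erase j, w x) + w i := by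
      rw [← Finset.sum_erase_add T _ hjT, Equiv.swap_apply_right]
      congr 1
      refine Finset.sum_congr rfl fun x hx => ?_
      rw [Equiv.swap_apply_of_ne_of_ne
        (by rintro rfl; exact hT (Finset.mem_of_mem_erase hx))
        (Finset.mem_erase.mp hx).1]
    have hTsum : ∑ x ∈ T, w x = (∑ x ∈ T.erase j, w x) + w j := by
      rw [← Finset.sum_erase_add T _ hjT]
    have h1 : v ((insert i T).image (Equiv.swap i j))
        = f (w₀ + ((∑ x ∈ T.erase j, w x) + w i + w j)) := by
      rw [hv, Finset.sum_image (fun a _ b _ h => hinj h),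
        Finset.sum_insert hT, hsumT, Equiv.swap_apply_left]
      ring_nf
    have h2 : v (T.image (Equiv.swap i j))
        = f (w₀ + ((∑ x ∈ T.erase j, w x) + w i)) := by
      rw [hv, Finset.sum_image (fun a _ b _ h => hinj h), hsumT]
    have h3 : v (insert i T) = f (w₀ + ((∑ x ∈ T.erase j, w x) + w i + w j)) := by
      rw [hv, Finset.sum_insert hT, hTsum]; ring_nf
    have h4 : v T = f (w₀ + ((∑ x ∈ T.erase j, w x) + w j)) := by
      rw [hv, hTsum]
    rw [h1, h2, h3, h4]
    have : f (w₀ + ((∑ x ∈ T.erase j, w x) + w j))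
        ≤ f (w₀ + ((∑ x ∈ T.erase j, w x) + w i)) := by
      apply hf; linarith
    linarith
  · have himg : T.image (Equiv.swap i j) = T := by
      apply Finset.image_congr ?_ |>.trans T.image_id
      intro x hx
      have hx' : x ∈ T := hx
      exact Equiv.swap_apply_of_ne_of_ne (by rintro rfl; exact hT hx')
        (by rintro rfl; exact hjT hx')
    have hins : (insert i T).image (Equiv.swap i j) = insert j T := by
      rw [Finset.image_insert, Equiv.swap_apply_left, himg]
    rw [himg, hins, hv (insert j T), hv (insert i T),
      Finset.sum_insert hjT, Finset.sum_insert hT]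
    have : f (w₀ + (w j + ∑ x ∈ T, w x)) ≤ f (w₀ + (w i + ∑ x ∈ T, w x)) := by
      apply hf; linarith
    linarith

/-- For a monotonically transformed modular utility function
`v(S) = f(w₀ + Σ_{i∈S} w_i)` with `f` monotonically non-decreasing,
if `w_i ≥ w_j` then `φ_i(v) ≥ φ_j(v)`. -/
theorem stmt_8 {ι : Type*} [Fintype ι] [DecidableEq ι]
    (hn : 2 ≤ Fintype.card ι)
    (f : ℝ → ℝ) (hf : Monotone f) (w₀ : ℝ) (w : ι → ℝ)
    (v : Finset ι → ℝ) (hv0 : v ∅ = 0)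
    (hv : ∀ S : Finset ι, v S = f (w₀ + ∑ i ∈ S, w i))
    (i j : ι) (hw : w j ≤ w i) :
    shapley v j ≤ shapley v i := by
  unfold shapley
  have hinj : Function.Injective (Equiv.swap i j) := (Equiv.swap i j).injective
  apply mul_le_mul_of_nonneg_left ?_ (by positivity)
  apply Finset.sum_le_sum
  intro k _
  apply mul_le_mul_of_nonneg_left ?_ (by positivity)
  have hmem : ∀ (a : ι) (S : Finset ι),
      S ∈ (Finset.univ.erase a).powerset.filter (fun S => S.card = k - 1)
        ↔ a ∉ S ∧ S.card = k - 1 := by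
    intro a S
    simp only [Finset.mem_filter, Finset.mem_powerset, Finset.subset_erase,
      Finset.subset_univ, true_and]
  have hre : ∑ S ∈ (Finset.univ.erase j).powerset.filter (fun S => S.card = k - 1),
        (v (insert j S) - v S)
      = ∑ T ∈ (Finset.univ.erase i).powerset.filter (fun S => S.card = k - 1),
        (v ((insert i T).image (Equiv.swap i j)) - v (T.image (Equiv.swap i j))) := by
    refine Finset.sum_nbij' (fun S => S.image (Equiv.swap i j))
      (fun T => T.image (Equiv.swap i j)) ?_ ?_ ?_ ?_ ?_
    · intro S hS
      rw [hmem j] at hS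
      rw [hmem i]
      refine ⟨fun hi => ?_, by
        rw [Finset.card_image_of_injective _ hinj]; exact hS.2⟩
      obtain ⟨x, hx, hxe⟩ := Finset.mem_image.mp hi
      have hx' : x = j := hinj (by rw [hxe, Equiv.swap_apply_right])
      exact hS.1 (hx' ▸ hx)
    · intro T hT
      rw [hmem i] at hT
      rw [hmem j]
      refine ⟨fun hj => ?_, by
        rw [Finset.card_image_of_injective _ hinj]; exact hT.2⟩
      obtain ⟨x, hx, hxe⟩ := Finset.mem_image.mp hj
      have hx' : x = i := hinj (by rw [hxe, Equiv.swap_apply_left])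
      exact hT.1 (hx' ▸ hx)
    · intro S _
      exact swap_double i j S
    · intro T _
      exact swap_double i j T
    · intro S hS
      rw [Finset.image_insert, Equiv.swap_apply_left, swap_double]
  rw [hre]
  apply Finset.sum_le_sum
  intro T hT
  rw [hmem i] at hT
  exact swap_key f hf w₀ w v hv i j hw T hT.1
end

section
/- Let N be a finite set with |N| = n ≥ 1, let v : 2^N → ℝ be a set function with Var_{S∼Unif(N)}(v(S)) > 0, and let ρ ∈ [0, 1). Let M denote the set of all MTM set functions on N, and for ṽ ∈ M define the normalized fitting residual R̄_v(ṽ) = E_{S∼Unif(N)}[(v(S) − ṽ(S))²] / Var_{S∼Unif(N)}(v(S)). Then inf_{ṽ ∈ M} R̄_v(ṽ) ≤ (1/(1−ρ²)) · (1 − cor_ρ(v)), where cor_ρ(v) = (E_{(S,S′)∼ρ-corr(N)}[v(S)·v(S′)] − (E_{S∼Unif(N)}[v(S)])²) / Var_{S∼Unif(N)}(v(S)) is the ρ-consistency index of v. -/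
open Finset

/-- Expectation of a set function under the uniform distribution over subsets of `ι`. -/
noncomputable def expectU {ι : Type*} [Fintype ι] [DecidableEq ι]
    (u : Finset ι → ℝ) : ℝ :=
  (2 ^ Fintype.card ι : ℝ)⁻¹ * ∑ S : Finset ι, u S

/-- Variance of a set function under the uniform distribution over subsets of `ι`. -/
noncomputable def varU {ι : Type*} [Fintype ι] [DecidableEq ι]
    (u : Finset ι → ℝ) : ℝ :=
  expectU (fun S => u S ^ 2) - expectU u ^ 2

/-- The `ρ`-correlated joint probability `P_ρ(S, S')` on pairs of subsets of `ι`. -/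
noncomputable def pCorr {ι : Type*} [Fintype ι] [DecidableEq ι]
    (ρ : ℝ) (S S' : Finset ι) : ℝ :=
  (2 ^ Fintype.card ι : ℝ)⁻¹ *
    ∏ i : ι, if (i ∈ S ↔ i ∈ S') then (1 + ρ) / 2 else (1 - ρ) / 2

/-- `E_{(S,S') ∼ ρ-corr(N)}[v(S)·v(S')]`. -/
noncomputable def corrExpect {ι : Type*} [Fintype ι] [DecidableEq ι]
    (ρ : ℝ) (v : Finset ι → ℝ) : ℝ :=
  ∑ S : Finset ι, ∑ S' : Finset ι, pCorr ρ S S' * (v S * v S')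

/-- A set function is monotonically transformed modular (MTM) if it has the form
`vtil(S) = f(w₀ + Σ_{i∈S} w_i)` with `f` monotonically non-decreasing. -/
def IsMTM {ι : Type*} [Fintype ι] [DecidableEq ι] (vtil : Finset ι → ℝ) : Prop :=
  ∃ f : ℝ → ℝ, ∃ w₀ : ℝ, ∃ w : ι → ℝ,
    Monotone f ∧ ∀ S : Finset ι, vtil S = f (w₀ + ∑ i ∈ S, w i)


section Helpers

variable {ι : Type*} [Fintype ι] [DecidableEq ι]

noncomputable def chiF (T S : Finset ι) : ℝ := ∏ i ∈ T, (if i ∈ S then (1:ℝ) else -1)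

lemma sum_prod_sdiff_aux (b : ι → ℝ) :
    ∑ S : Finset ι, ∏ i ∈ Finset.univ \ S, b i = ∏ i : ι, (1 + b i) := by
  rw [Finset.prod_add, Finset.powerset_univ]
  simp

lemma sum_prod_mem_aux (d : ι → ℝ) :
    ∑ T : Finset ι, ∏ i ∈ T, d i = ∏ i : ι, (d i + 1) := by
  rw [Finset.prod_add, Finset.powerset_univ]
  simp

lemma chiF_eq_sdiff (T S : Finset ι) :
    chiF T S = ∏ i ∈ Finset.univ \ S, (if i ∈ T then (-1:ℝ) else 1) := by
  have h1 : chiF T S = ∏ i : ι, (if i ∈ S then (1:ℝ) else if i ∈ T then -1 else 1) := by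
    rw [chiF]
    rw [← Finset.prod_subset (Finset.subset_univ T)
      (fun i _ hiT => by split_ifs <;> simp_all)]
    exact Finset.prod_congr rfl fun i hiT => by split_ifs <;> simp_all
  have h2 : (∏ i ∈ Finset.univ \ S, (if i ∈ T then (-1:ℝ) else 1))
      = ∏ i : ι, (if i ∈ S then (1:ℝ) else if i ∈ T then -1 else 1) := by
    rw [← Finset.prod_subset (Finset.sdiff_subset (s := (univ : Finset ι)) (t := S))
      (fun i _ hi => by simp only [mem_sdiff, mem_univ, true_and, not_not] at hi; simp [hi])]
    exact Finset.prod_congr rfl fun i hi => by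
      simp only [mem_sdiff] at hi; simp [hi.2]
  rw [h1, ← h2]

lemma sum_chiF_mul_chiF (T U : Finset ι) :
    ∑ S : Finset ι, chiF T S * chiF U S =
      if T = U then (2:ℝ) ^ Fintype.card ι else 0 := by
  have : ∀ S : Finset ι, chiF T S * chiF U S =
      ∏ i ∈ Finset.univ \ S,
        ((if i ∈ T then (-1:ℝ) else 1) * (if i ∈ U then (-1:ℝ) else 1)) := by
    intro S; rw [chiF_eq_sdiff, chiF_eq_sdiff, Finset.prod_mul_distrib]
  simp only [this, sum_prod_sdiff_aux]
  split_ifs with h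
  · subst h
    have : ∀ i : ι, (1 + (if i ∈ T then (-1:ℝ) else 1) * (if i ∈ T then (-1:ℝ) else 1)) = 2 := by
      intro i; split_ifs <;> norm_num
    simp only [this, Finset.prod_const, Finset.card_univ]
  · obtain ⟨i, hi⟩ : ∃ i, ¬(i ∈ T ↔ i ∈ U) := by
      by_contra hc
      push_neg at hc
      exact h (Finset.ext fun i => hc i)
    refine Finset.prod_eq_zero (Finset.mem_univ i) ?_
    rcases not_iff.mp hi with h' 
    by_cases hT : i ∈ T
    · have hU : i ∉ U := by tauto
      simp [hT, hU]
    · have hU : i ∈ U := by tauto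
      simp [hT, hU]

lemma sum_T_chiF (S S' : Finset ι) :
    ∑ T : Finset ι, chiF T S * chiF T S' =
      if S = S' then (2:ℝ) ^ Fintype.card ι else 0 := by
  have : ∀ T : Finset ι, chiF T S * chiF T S' =
      ∏ i ∈ T, ((if i ∈ S then (1:ℝ) else -1) * (if i ∈ S' then (1:ℝ) else -1)) := by
    intro T; rw [chiF, chiF, Finset.prod_mul_distrib]
  simp only [this, sum_prod_mem_aux]
  split_ifs with h
  · subst h
    have : ∀ i : ι, ((if i ∈ S then (1:ℝ) else -1) * (if i ∈ S then (1:ℝ) else -1) + 1) = 2 := by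
      intro i; split_ifs <;> norm_num
    simp only [this, Finset.prod_const, Finset.card_univ]
  · obtain ⟨i, hi⟩ : ∃ i, ¬(i ∈ S ↔ i ∈ S') := by
      by_contra hc
      push_neg at hc
      exact h (Finset.ext fun i => hc i)
    refine Finset.prod_eq_zero (Finset.mem_univ i) ?_
    by_cases hS : i ∈ S
    · have hU : i ∉ S' := by tauto
      simp [hS, hU]
    · have hU : i ∈ S' := by tauto
      simp [hS, hU]

noncomputable def fcoefF (v : Finset ι → ℝ) (T : Finset ι) : ℝ :=
  (2 ^ Fintype.card ι : ℝ)⁻¹ * ∑ S : Finset ι, v S * chiF T S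

lemma two_pow_ne (ι : Type*) [Fintype ι] : ((2:ℝ) ^ Fintype.card ι) ≠ 0 := by positivity

lemma parsevalF (v : Finset ι → ℝ) :
    ∑ T : Finset ι, fcoefF v T ^ 2 = expectU (fun S => v S ^ 2) := by
  have key : ∀ T : Finset ι, fcoefF v T ^ 2 =
      (2 ^ Fintype.card ι : ℝ)⁻¹ * (2 ^ Fintype.card ι : ℝ)⁻¹ *
        ∑ S : Finset ι, ∑ S' : Finset ι, v S * v S' * (chiF T S * chiF T S') := by
    intro T
    have h0 : fcoefF v T ^ 2 = (2 ^ Fintype.card ι : ℝ)⁻¹ * (2 ^ Fintype.card ι : ℝ)⁻¹ *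
        ((∑ S : Finset ι, v S * chiF T S) * (∑ S' : Finset ι, v S' * chiF T S')) := by
      rw [fcoefF]; ring
    rw [h0, Finset.sum_mul_sum]
    congr 1
    exact Finset.sum_congr rfl fun S _ => Finset.sum_congr rfl fun S' _ => by ring
  simp only [key]
  rw [← Finset.mul_sum, Finset.sum_comm]
  rw [expectU]
  have : ∀ S : Finset ι, ∑ T : Finset ι, ∑ S' : Finset ι, v S * v S' * (chiF T S * chiF T S')
      = v S ^ 2 * (2:ℝ) ^ Fintype.card ι := by
    intro S
    rw [Finset.sum_comm]
    have h1 : ∀ S' : Finset ι, ∑ T : Finset ι, v S * v S' * (chiF T S * chiF T S')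
        = v S * v S' * (if S = S' then (2:ℝ) ^ Fintype.card ι else 0) := by
      intro S'
      rw [← Finset.mul_sum, sum_T_chiF]
    simp only [h1, mul_ite, mul_zero]
    rw [Finset.sum_ite_eq (univ : Finset (Finset ι)) S (fun S' => v S * v S' * 2 ^ Fintype.card ι)]
    simp [sq]
  simp only [this]
  rw [← Finset.sum_mul]
  field_simp

lemma expectU_eq_fcoefF (v : Finset ι → ℝ) : expectU v = fcoefF v ∅ := by
  rw [expectU, fcoefF]
  congr 1
  exact Finset.sum_congr rfl fun S _ => by simp [chiF]

lemma kernel_expand (ρ : ℝ) (S S' : Finset ι) :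
    (∏ i : ι, if (i ∈ S ↔ i ∈ S') then (1 + ρ) / 2 else (1 - ρ) / 2)
      = (2 ^ Fintype.card ι : ℝ)⁻¹ *
        ∑ T : Finset ι, ρ ^ T.card * (chiF T S * chiF T S') := by
  have h1 : ∀ T : Finset ι, ρ ^ T.card * (chiF T S * chiF T S')
      = ∏ i ∈ T, (ρ * ((if i ∈ S then (1:ℝ) else -1) * (if i ∈ S' then (1:ℝ) else -1))) := by
    intro T
    rw [Finset.prod_mul_distrib, Finset.prod_const, chiF, chiF, Finset.prod_mul_distrib]
  simp only [h1, sum_prod_mem_aux]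
  have h2 : ∀ i : ι,
      (ρ * ((if i ∈ S then (1:ℝ) else -1) * (if i ∈ S' then (1:ℝ) else -1)) + 1)
        = 2 * (if (i ∈ S ↔ i ∈ S') then (1 + ρ) / 2 else (1 - ρ) / 2) := by
    intro i
    by_cases hS : i ∈ S <;> by_cases hS' : i ∈ S' <;> simp [hS, hS'] <;> ring
  rw [Finset.prod_congr rfl fun i _ => h2 i, Finset.prod_mul_distrib, Finset.prod_const,
    Finset.card_univ, ← mul_assoc, inv_mul_cancel₀ (two_pow_ne ι), one_mul]

lemma corrExpect_eq (ρ : ℝ) (v : Finset ι → ℝ) :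
    corrExpect ρ v = ∑ T : Finset ι, ρ ^ T.card * fcoefF v T ^ 2 := by
  rw [corrExpect]
  have h1 : ∀ S S' : Finset ι, pCorr ρ S S' * (v S * v S')
      = ∑ T : Finset ι, (2 ^ Fintype.card ι : ℝ)⁻¹ * (2 ^ Fintype.card ι : ℝ)⁻¹ *
          (ρ ^ T.card * (v S * chiF T S * (v S' * chiF T S'))) := by
    intro S S'
    rw [pCorr, kernel_expand]
    simp only [Finset.mul_sum, Finset.sum_mul]
    exact Finset.sum_congr rfl fun T _ => by ring
  have h3 : ∀ T : Finset ι, ρ ^ T.card * fcoefF v T ^ 2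
      = ∑ S : Finset ι, ∑ S' : Finset ι, (2 ^ Fintype.card ι : ℝ)⁻¹ *
          (2 ^ Fintype.card ι : ℝ)⁻¹ *
          (ρ ^ T.card * (v S * chiF T S * (v S' * chiF T S'))) := by
    intro T
    have h2 : ρ ^ T.card * fcoefF v T ^ 2 = (2 ^ Fintype.card ι : ℝ)⁻¹ *
        (2 ^ Fintype.card ι : ℝ)⁻¹ * (ρ ^ T.card *
          ((∑ S : Finset ι, v S * chiF T S) * (∑ S' : Finset ι, v S' * chiF T S'))) := by
      rw [fcoefF]; ring
    rw [h2, Finset.sum_mul_sum]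
    simp only [Finset.mul_sum]
  rw [Finset.sum_congr rfl fun S _ => Finset.sum_congr rfl fun S' (_ : S' ∈ univ) => h1 S S',
    Finset.sum_congr rfl fun T (_ : T ∈ (univ : Finset (Finset ι))) => h3 T,
    Finset.sum_congr rfl fun S (_ : S ∈ (univ : Finset (Finset ι))) => Finset.sum_comm,
    Finset.sum_comm]

lemma expectU_sub_sq (v : Finset ι → ℝ) (D : Finset (Finset ι)) :
    expectU (fun S => (v S - ∑ T ∈ D, fcoefF v T * chiF T S) ^ 2)
      = expectU (fun S => v S ^ 2) - ∑ T ∈ D, fcoefF v T ^ 2 := by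
  have hE1 : ((2 ^ Fintype.card ι : ℝ)⁻¹ *
      ∑ S : Finset ι, (v S * ∑ T ∈ D, fcoefF v T * chiF T S))
        = ∑ T ∈ D, fcoefF v T ^ 2 := by
    have h : ∀ S : Finset ι, v S * ∑ T ∈ D, fcoefF v T * chiF T S
        = ∑ T ∈ D, fcoefF v T * (v S * chiF T S) := by
      intro S; rw [Finset.mul_sum]; exact Finset.sum_congr rfl fun T _ => by ring
    simp only [h]
    rw [Finset.sum_comm, Finset.mul_sum]
    refine Finset.sum_congr rfl fun T _ => ?_
    rw [← Finset.mul_sum]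
    simp only [fcoefF]
    ring
  have hE2 : ((2 ^ Fintype.card ι : ℝ)⁻¹ *
      ∑ S : Finset ι, (∑ T ∈ D, fcoefF v T * chiF T S) ^ 2)
        = ∑ T ∈ D, fcoefF v T ^ 2 := by
    have h : ∀ S : Finset ι, (∑ T ∈ D, fcoefF v T * chiF T S) ^ 2
        = ∑ T ∈ D, ∑ U ∈ D, fcoefF v T * fcoefF v U * (chiF T S * chiF U S) := by
      intro S
      rw [sq, Finset.sum_mul_sum]
      exact Finset.sum_congr rfl fun T _ => Finset.sum_congr rfl fun U _ => by ring
    simp only [h]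
    rw [Finset.sum_comm, Finset.mul_sum]
    have h2 : ∀ T ∈ D, ((2 ^ Fintype.card ι : ℝ)⁻¹ *
        ∑ S : Finset ι, ∑ U ∈ D, fcoefF v T * fcoefF v U * (chiF T S * chiF U S))
          = fcoefF v T ^ 2 := by
      intro T hT
      rw [Finset.sum_comm]
      have h3 : ∀ U ∈ D, (∑ S : Finset ι, fcoefF v T * fcoefF v U * (chiF T S * chiF U S))
          = fcoefF v T * fcoefF v U * (if T = U then (2:ℝ) ^ Fintype.card ι else 0) := by
        intro U _
        rw [← Finset.mul_sum, sum_chiF_mul_chiF]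
      rw [Finset.sum_congr rfl h3]
      simp only [mul_ite, mul_zero]
      rw [Finset.sum_ite_eq D T (fun U => fcoefF v T * fcoefF v U * 2 ^ Fintype.card ι)]
      simp only [hT, if_pos]
      rw [sq]
      field_simp
    exact Finset.sum_congr rfl h2
  have hsplit : ∀ S : Finset ι, (v S - ∑ T ∈ D, fcoefF v T * chiF T S) ^ 2
      = v S ^ 2 - 2 * (v S * ∑ T ∈ D, fcoefF v T * chiF T S)
        + (∑ T ∈ D, fcoefF v T * chiF T S) ^ 2 := by
    intro S; ring
  rw [expectU]
  simp only [hsplit]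
  rw [Finset.sum_add_distrib, Finset.sum_sub_distrib, mul_add, mul_sub, hE2, expectU]
  have : ((2 ^ Fintype.card ι : ℝ)⁻¹ *
      ∑ S : Finset ι, 2 * (v S * ∑ T ∈ D, fcoefF v T * chiF T S))
        = 2 * ∑ T ∈ D, fcoefF v T ^ 2 := by
    rw [← hE1, ← Finset.mul_sum]
    ring
  rw [this]
  ring

lemma expectU_sq_nonneg (u : Finset ι → ℝ) : 0 ≤ expectU (fun S => u S ^ 2) := by
  rw [expectU]
  have : (0:ℝ) ≤ ∑ S : Finset ι, u S ^ 2 := Finset.sum_nonneg fun S _ => sq_nonneg _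
  positivity

lemma small_eq :
    (univ : Finset (Finset ι)).filter (fun T => T.card ≤ 1)
      = insert (∅ : Finset ι) ((univ : Finset ι).image fun i => ({i} : Finset ι)) := by
  ext T
  simp only [Finset.mem_filter, Finset.mem_univ, true_and, Finset.mem_insert,
    Finset.mem_image]
  constructor
  · intro h
    rcases Nat.le_one_iff_eq_zero_or_eq_one.mp h with h | h
    · exact Or.inl (Finset.card_eq_zero.mp h)
    · obtain ⟨i, rfl⟩ := Finset.card_eq_one.mp h
      exact Or.inr ⟨i, rfl⟩
  · rintro (rfl | ⟨i, -, rfl⟩) <;> simp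

lemma modular_form (v : Finset ι → ℝ) (S : Finset ι) :
    ∑ T ∈ (univ : Finset (Finset ι)).filter (fun T => T.card ≤ 1),
        fcoefF v T * chiF T S
      = (fcoefF v ∅ - ∑ i : ι, fcoefF v {i}) + ∑ i ∈ S, 2 * fcoefF v {i} := by
  rw [small_eq, Finset.sum_insert (by simp), Finset.sum_image
    (fun i _ j _ h => Finset.singleton_injective h)]
  have h0 : chiF (∅ : Finset ι) S = 1 := by simp [chiF]
  have h1 : ∀ i : ι, chiF ({i} : Finset ι) S = if i ∈ S then 1 else -1 := by
    intro i; rw [chiF, Finset.prod_singleton]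
  simp only [h0, h1, mul_one]
  have h2 : ∀ i : ι, fcoefF v {i} * (if i ∈ S then (1:ℝ) else -1)
      = (if i ∈ S then 2 * fcoefF v {i} else 0) - fcoefF v {i} := by
    intro i; split_ifs <;> ring
  simp only [h2]
  rw [Finset.sum_sub_distrib]
  have h3 : ∑ i : ι, (if i ∈ S then 2 * fcoefF v {i} else 0) = ∑ i ∈ S, 2 * fcoefF v {i} := by
    rw [Finset.sum_ite_mem, Finset.univ_inter]
  rw [h3]
  ring

end Helpers

/-- The infimum over MTM functions `vtil` of the normalized fitting residual
`E[(v(S) − vtil(S))²] / Var(v(S))` is at most `(1/(1−ρ²)) · (1 − cor_ρ(v))`, where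
`cor_ρ(v)` is the `ρ`-consistency index of `v`. -/
theorem stmt_10 {ι : Type*} [Fintype ι] [DecidableEq ι]
    (hn : 1 ≤ Fintype.card ι)
    (v : Finset ι → ℝ) (hvar : 0 < varU v)
    (ρ : ℝ) (hρ0 : 0 ≤ ρ) (hρ1 : ρ < 1) :
    sInf {r : ℝ | ∃ vtil : Finset ι → ℝ, IsMTM vtil ∧
        r = expectU (fun S => (v S - vtil S) ^ 2) / varU v} ≤
      (1 / (1 - ρ ^ 2)) * (1 - (corrExpect ρ v - expectU v ^ 2) / varU v) := by
  classical
  set D : Finset (Finset ι) := (univ : Finset (Finset ι)).filter (fun T => T.card ≤ 1) with hD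
  set ℓ : Finset ι → ℝ := fun S => ∑ T ∈ D, fcoefF v T * chiF T S with hℓ
  have hMTM : IsMTM ℓ := by
    refine ⟨id, fcoefF v ∅ - ∑ i : ι, fcoefF v {i}, fun i => 2 * fcoefF v {i},
      monotone_id, fun S => ?_⟩
    simp only [hℓ, hD, id_eq]
    exact modular_form v S
  have hbdd : BddBelow {r : ℝ | ∃ vtil : Finset ι → ℝ, IsMTM vtil ∧
      r = expectU (fun S => (v S - vtil S) ^ 2) / varU v} := by
    refine ⟨0, fun r hr => ?_⟩
    obtain ⟨vtil, -, rfl⟩ := hr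
    exact div_nonneg (expectU_sq_nonneg (fun S => v S - vtil S)) hvar.le
  have hmem : expectU (fun S => (v S - ℓ S) ^ 2) / varU v ∈ {r : ℝ | ∃ vtil : Finset ι → ℝ,
      IsMTM vtil ∧ r = expectU (fun S => (v S - vtil S) ^ 2) / varU v} := ⟨ℓ, hMTM, rfl⟩
  refine le_trans (csInf_le hbdd hmem) ?_
  -- abbreviations
  set A : ℝ := expectU (fun S => v S ^ 2) with hA
  set B : ℝ := ∑ T ∈ D, fcoefF v T ^ 2 with hB
  set C : ℝ := corrExpect ρ v with hC
  have hρ2 : 0 < 1 - ρ ^ 2 := by nlinarith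
  have hres : expectU (fun S => (v S - ℓ S) ^ 2) = A - B := by
    rw [hℓ]; exact expectU_sub_sq v D
  -- key inequality
  have key : (1 - ρ ^ 2) * (A - B) ≤ A - C := by
    have hPar : A = ∑ T : Finset ι, fcoefF v T ^ 2 := (parsevalF v).symm
    have hCorr : C = ∑ T : Finset ι, ρ ^ T.card * fcoefF v T ^ 2 := corrExpect_eq ρ v
    have hsplit : (∑ T ∈ D, fcoefF v T ^ 2)
        + ∑ T ∈ (univ : Finset (Finset ι)).filter (fun T => ¬ T.card ≤ 1), fcoefF v T ^ 2
        = ∑ T : Finset ι, fcoefF v T ^ 2 := by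
      rw [hD]
      exact Finset.sum_filter_add_sum_filter_not univ _ _
    have hAB : A - B = ∑ T ∈ (univ : Finset (Finset ι)).filter (fun T => ¬ T.card ≤ 1),
        fcoefF v T ^ 2 := by
      rw [hPar, hB, ← hsplit]; ring
    have hAC : A - C = ∑ T : Finset ι,
        (fcoefF v T ^ 2 - ρ ^ T.card * fcoefF v T ^ 2) := by
      rw [hPar, hCorr, Finset.sum_sub_distrib]
    have hge : ∑ T ∈ (univ : Finset (Finset ι)).filter (fun T => ¬ T.card ≤ 1),
        (fcoefF v T ^ 2 - ρ ^ T.card * fcoefF v T ^ 2)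
          ≤ ∑ T : Finset ι, (fcoefF v T ^ 2 - ρ ^ T.card * fcoefF v T ^ 2) := by
      refine Finset.sum_le_sum_of_subset_of_nonneg (Finset.filter_subset _ _)
        (fun T _ _ => ?_)
      have h1 : ρ ^ T.card ≤ 1 := pow_le_one₀ hρ0 hρ1.le
      nlinarith [sq_nonneg (fcoefF v T)]
    have hterm : ∀ T ∈ (univ : Finset (Finset ι)).filter (fun T => ¬ T.card ≤ 1),
        (1 - ρ ^ 2) * fcoefF v T ^ 2
          ≤ fcoefF v T ^ 2 - ρ ^ T.card * fcoefF v T ^ 2 := by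
      intro T hT
      have h2le : 2 ≤ T.card := by
        simp only [Finset.mem_filter] at hT; omega
      have h2 : ρ ^ T.card ≤ ρ ^ 2 := pow_le_pow_of_le_one hρ0 hρ1.le h2le
      nlinarith [sq_nonneg (fcoefF v T)]
    calc (1 - ρ ^ 2) * (A - B)
        = ∑ T ∈ (univ : Finset (Finset ι)).filter (fun T => ¬ T.card ≤ 1),
            (1 - ρ ^ 2) * fcoefF v T ^ 2 := by rw [hAB, Finset.mul_sum]
      _ ≤ ∑ T ∈ (univ : Finset (Finset ι)).filter (fun T => ¬ T.card ≤ 1),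
            (fcoefF v T ^ 2 - ρ ^ T.card * fcoefF v T ^ 2) := Finset.sum_le_sum hterm
      _ ≤ ∑ T : Finset ι, (fcoefF v T ^ 2 - ρ ^ T.card * fcoefF v T ^ 2) := hge
      _ = A - C := hAC.symm
  -- final arithmetic
  have h1 : 1 - (corrExpect ρ v - expectU v ^ 2) / varU v = (A - C) / varU v := by
    rw [eq_div_iff (ne_of_gt hvar), sub_mul, one_mul,
      div_mul_cancel₀ _ (ne_of_gt hvar)]
    have : varU v = A - expectU v ^ 2 := by rw [varU, hA]
    rw [this, hC]
    ring
  rw [hres, h1, mul_div_assoc']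
  refine (div_le_div_iff_of_pos_right hvar).mpr ?_
  rw [one_div_mul_eq_div]
  exact (le_div_iff₀ hρ2).mpr (by rw [mul_comm]; exact key)
end
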